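/- arXiv:2103.04802 — 3 statements merged into one kernel-verified Lean document; each statement's English description precedes it below -/
import Mathlib

section
/- For every β > 0 and h > 0, there exists a unique q > 0 satisfying the fixed-point equation q = E[tanh²(hξ + βz√q)], where ξ and z are independent standard Gaussian random variables. Moreover this unique q lies in (0,1). -/
open MeasureTheory Real

local notation "γ" => ProbabilityTheory.gaussianReal 0 1

section SKaux

open ProbabilityTheory
open scoped NNReal ENNReal

namespace SK


lemma tanh_hasDerivAt (x : ℝ) : HasDerivAt Real.tanh ((Real.cosh x ^ 2)⁻¹) x := by
  have h : HasDerivAt (fun x => Real.sinh x / Real.cosh x)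
      ((Real.cosh x * Real.cosh x - Real.sinh x * Real.sinh x) / (Real.cosh x ^ 2)) x :=
    (Real.hasDerivAt_sinh x).div (Real.hasDerivAt_cosh x) (Real.cosh_pos x).ne'
  have : (fun x => Real.sinh x / Real.cosh x) = Real.tanh := by
    funext y; rw [Real.tanh_eq_sinh_div_cosh]
  rw [this] at h
  convert h using 1
  have := Real.cosh_sq_sub_sinh_sq x
  field_simp
  nlinarith [this]

lemma continuous_tanh : Continuous Real.tanh := by
  have : Real.tanh = fun x => Real.sinh x / Real.cosh x := by
    funext y; rw [Real.tanh_eq_sinh_div_cosh]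
  rw [this]
  exact Real.continuous_sinh.div Real.continuous_cosh (fun x => (Real.cosh_pos x).ne')

lemma tanh_nonneg {x : ℝ} (hx : 0 ≤ x) : 0 ≤ Real.tanh x := by
  rw [Real.tanh_eq_sinh_div_cosh]
  exact div_nonneg (by rwa [← Real.sinh_zero, Real.sinh_le_sinh]) (Real.cosh_pos x).le

lemma tanh_sq_lt_one (x : ℝ) : Real.tanh x ^ 2 < 1 := by
  rw [Real.tanh_eq_sinh_div_cosh, div_pow]
  rw [div_lt_one (by positivity)]
  nlinarith [Real.cosh_sq_sub_sinh_sq x]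

lemma tanh_sq_nonneg (x : ℝ) : 0 ≤ Real.tanh x ^ 2 := sq_nonneg _

/-- `t ↦ tanh t / t` is antitone on `(0, ∞)`. -/
lemma tanh_div_self_antitone : AntitoneOn (fun t => Real.tanh t / t) (Set.Ioi 0) := by
  have hderiv : ∀ t ∈ Set.Ioi (0:ℝ), HasDerivAt (fun t => Real.tanh t / t)
      (((Real.cosh t ^ 2)⁻¹ * t - Real.tanh t) / t ^ 2) t := by
    intro t ht
    have := (tanh_hasDerivAt t).div (hasDerivAt_id t) (ne_of_gt (Set.mem_Ioi.mp ht))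
    rw [mul_one] at this
    exact this
  apply antitoneOn_of_deriv_nonpos (convex_Ioi 0)
  · intro t ht
    exact (continuous_tanh.continuousAt.div continuousAt_id (ne_of_gt (Set.mem_Ioi.mp ht))).continuousWithinAt
  · intro t ht
    rw [interior_Ioi] at ht
    exact (hderiv t ht).differentiableAt.differentiableWithinAt
  · intro t ht
    rw [interior_Ioi] at ht
    rw [(hderiv t ht).deriv]
    have h1 : t ≤ Real.sinh t * Real.cosh t := by
      have := (Real.self_lt_sinh_iff (x := t)).2 ht
      nlinarith [Real.one_le_cosh t, Real.sinh_pos_iff.mpr (Set.mem_Ioi.mp ht)]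
    have hc := Real.cosh_pos t
    apply div_nonpos_of_nonpos_of_nonneg _ (sq_nonneg t)
    rw [sub_nonpos, Real.tanh_eq_sinh_div_cosh]
    rw [inv_mul_le_iff₀ (by positivity)]
    rw [div_eq_mul_inv, ← mul_assoc]
    have hc2 : cosh t ^ 2 * Real.sinh t * (Real.cosh t)⁻¹ = Real.sinh t * Real.cosh t := by
      field_simp
    rw [hc2]; exact h1


noncomputable def u (v : ℝ) : ℝ := Real.tanh (Real.sqrt v) ^ 2

lemma continuous_u : Continuous u :=
  (continuous_tanh.comp Real.continuous_sqrt).pow 2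

noncomputable def D (v : ℝ) : ℝ :=
  Real.tanh (Real.sqrt v) / Real.sqrt v * (Real.cosh (Real.sqrt v) ^ 2)⁻¹

lemma u_hasDerivAt {v : ℝ} (hv : 0 < v) : HasDerivAt u (D v) v := by
  have hs : HasDerivAt Real.sqrt (1 / (2 * Real.sqrt v)) v := Real.hasDerivAt_sqrt hv.ne'
  have ht : HasDerivAt (fun v => Real.tanh (Real.sqrt v))
      ((Real.cosh (Real.sqrt v) ^ 2)⁻¹ * (1 / (2 * Real.sqrt v))) v :=
    (tanh_hasDerivAt (Real.sqrt v)).comp v hs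
  have h2 := ht.pow 2
  have hsv : Real.sqrt v ≠ 0 := (Real.sqrt_pos.mpr hv).ne'
  refine h2.congr_deriv ?_
  unfold D
  field_simp
  ring

lemma D_antitone : AntitoneOn D (Set.Ioi 0) := by
  intro a ha b hb hab
  have ha' : (0:ℝ) < Real.sqrt a := Real.sqrt_pos.mpr ha
  have hb' : (0:ℝ) < Real.sqrt b := Real.sqrt_pos.mpr hb
  have hab' : Real.sqrt a ≤ Real.sqrt b := Real.sqrt_le_sqrt hab
  have h1 : Real.tanh (Real.sqrt b) / Real.sqrt b ≤ Real.tanh (Real.sqrt a) / Real.sqrt a :=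
    tanh_div_self_antitone ha' hb' hab'
  have h2 : (Real.cosh (Real.sqrt b) ^ 2)⁻¹ ≤ (Real.cosh (Real.sqrt a) ^ 2)⁻¹ := by
    apply inv_anti₀ (by positivity)
    have : Real.cosh (Real.sqrt a) ≤ Real.cosh (Real.sqrt b) := by
      rw [Real.cosh_le_cosh, abs_of_pos ha', abs_of_pos hb']; exact hab'
    nlinarith [Real.cosh_pos (Real.sqrt a)]
  unfold D
  apply mul_le_mul h1 h2 (by positivity)
  exact div_nonneg (tanh_nonneg ha'.le) ha'.le

lemma u_concave : ConcaveOn ℝ (Set.Ici 0) u := by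
  apply AntitoneOn.concaveOn_of_deriv (convex_Ici 0) continuous_u.continuousOn
  · intro v hv
    rw [interior_Ici] at hv
    exact (u_hasDerivAt (Set.mem_Ioi.mp hv)).differentiableAt.differentiableWithinAt
  · intro a ha b hb hab
    rw [interior_Ici] at ha hb
    rw [(u_hasDerivAt (Set.mem_Ioi.mp ha)).deriv, (u_hasDerivAt (Set.mem_Ioi.mp hb)).deriv]
    exact D_antitone ha hb hab


lemma pdf_conv (a : ℝ) {c : ℝ} (hc : 0 < c) (u : ℝ) :
    ∫ x, gaussianPDFReal 0 1 x * gaussianPDFReal (a*x) ⟨c^2, sq_nonneg c⟩ u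
      = gaussianPDFReal 0 ⟨a^2+c^2, by positivity⟩ u := by
  have hs : (0:ℝ) < a^2 + c^2 := by positivity
  set s : ℝ := a^2 + c^2 with hs_def
  have hb : (0:ℝ) < s / (2*c^2) := by positivity
  have hpt : ∀ x : ℝ, gaussianPDFReal 0 1 x * gaussianPDFReal (a*x) ⟨c^2, sq_nonneg c⟩ u
      = ((√(2*π*1))⁻¹ * (√(2*π*c^2))⁻¹ * rexp (-u^2/(2*s)))
        * rexp (-(s/(2*c^2)) * (x - a*u/s)^2) := by
    intro x
    simp only [gaussianPDFReal, NNReal.coe_mk, NNReal.coe_one]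
    simp only [NNReal.toReal]
    rw [mul_mul_mul_comm, ← Real.exp_add, mul_assoc ((√(2*π*1))⁻¹ * (√(2*π*c^2))⁻¹),
      ← Real.exp_add]
    congr 1
    congr 1
    have hc' := hc.ne'
    have hs' := hs.ne'
    field_simp
    rw [hs_def]
    ring
  rw [integral_congr_ae (ae_of_all _ hpt), integral_const_mul,
    integral_sub_right_eq_self (fun x => rexp (-(s/(2*c^2)) * x^2)) (a*u/s),
    integral_gaussian]
  simp only [gaussianPDFReal, NNReal.coe_mk, NNReal.toReal]
  have h2π : (0:ℝ) < √(2*π) := Real.sqrt_pos.mpr (by positivity)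
  have hss : (0:ℝ) < √s := Real.sqrt_pos.mpr hs
  have e1 : √(2*π*1) = √(2*π) := by norm_num
  have e2 : √(2*π*c^2) = √(2*π) * c := by
    rw [Real.sqrt_mul (by positivity), Real.sqrt_sq hc.le]
  have e3 : √(π / (s / (2*c^2))) = √(2*π) * c / √s := by
    rw [show π / (s / (2*c^2)) = (2*π*c^2) / s by field_simp,
      Real.sqrt_div (by positivity), e2]
  have e4 : √(2*π*s) = √(2*π) * √s := Real.sqrt_mul (by positivity) s
  rw [e1, e2, e3, e4]
  rw [show u - 0 = u by ring]
  field_simp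
  ring




lemma map_affine {c : ℝ} (hc : c ≠ 0) (m : ℝ) :
    Measure.map (fun y => m + c * y) γ = gaussianReal m ⟨c^2, sq_nonneg c⟩ := by
  have h1 : Measure.map (fun y => c * y) γ = gaussianReal 0 ⟨c^2, sq_nonneg c⟩ := by
    exact (by simpa using gaussianReal_map_const_mul (μ := 0) (v := 1) c :
      Measure.map (fun y => c * y) γ = gaussianReal 0 (NNReal.mk (c^2) (sq_nonneg c)))
  have hcomp : (fun y => m + c * y) = (fun y => m + y) ∘ (fun y => c * y) := rfl
  rw [hcomp, ← Measure.map_map (measurable_const_add m) (measurable_const_mul c), h1]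
  simpa using gaussianReal_map_const_add (μ := 0) (v := ⟨c^2, sq_nonneg c⟩) m

lemma integral_gaussianReal {m : ℝ} {v : ℝ≥0} (hv : v ≠ 0) (f : ℝ → ℝ) :
    ∫ x, f x ∂(gaussianReal m v) = ∫ x, gaussianPDFReal m v x * f x := by
  rw [gaussianReal_of_var_ne_zero _ hv]
  have hpdf : gaussianPDF m v = fun x => ((gaussianPDFReal m v x).toNNReal : ℝ≥0∞) := rfl
  rw [hpdf, integral_withDensity_eq_integral_smul
    (measurable_gaussianPDFReal m v).real_toNNReal f]
  congr 1 with x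
  rw [NNReal.smul_def, Real.coe_toNNReal _ (gaussianPDFReal_nonneg m v x), smul_eq_mul]

lemma integral_comp_affine {c : ℝ} (hc : c ≠ 0) (m : ℝ) {f : ℝ → ℝ} (hf : Continuous f) :
    ∫ y, f (m + c * y) ∂γ = ∫ x, gaussianPDFReal m ⟨c^2, sq_nonneg c⟩ x * f x := by
  have h1 : ∫ y, f (m + c * y) ∂γ = ∫ x, f x ∂(Measure.map (fun y => m + c * y) γ) := by
    rw [integral_map (by fun_prop) hf.aestronglyMeasurable]
  rw [h1, map_affine hc m]
  exact integral_gaussianReal (by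
    intro h
    exact pow_ne_zero 2 hc (by simpa using (show c^2 = 0 from congrArg NNReal.toReal h))) f


lemma continuous_pdf_param (a : ℝ) (v : ℝ≥0) :
    Continuous (fun p : ℝ × ℝ => gaussianPDFReal (a * p.1) v p.2) := by
  simp only [gaussianPDFReal_def]
  fun_prop

lemma conv_tanh (a : ℝ) {c : ℝ} (hc : 0 < c) :
    ∫ x, ∫ y, Real.tanh (a * x + c * y) ^ 2 ∂γ ∂γ
      = ∫ y, Real.tanh (Real.sqrt (a^2 + c^2) * y) ^ 2 ∂γ := by
  have hTc : Continuous (fun x : ℝ => Real.tanh x ^ 2) := continuous_tanh.pow 2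
  have hT1 : ∀ x : ℝ, Real.tanh x ^ 2 ≤ 1 := fun x => (tanh_sq_lt_one x).le
  have hs : (0:ℝ) < a^2 + c^2 := by positivity
  have hv : (⟨c^2, sq_nonneg c⟩ : ℝ≥0) ≠ 0 := by
    intro h
    exact pow_ne_zero 2 hc.ne' (by simpa [NNReal.toReal] using congrArg NNReal.toReal h)
  set g : ℝ × ℝ → ℝ := fun p =>
    Real.tanh p.2 ^ 2 * (gaussianPDFReal 0 1 p.1 * gaussianPDFReal (a * p.1) ⟨c^2, sq_nonneg c⟩ p.2)
    with hg_def
  have hgcont : Continuous g := by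
    apply (hTc.comp continuous_snd).mul
    apply Continuous.mul _ (continuous_pdf_param a _)
    have : Continuous (gaussianPDFReal 0 1) := by
      simp only [gaussianPDFReal_def]; fun_prop
    exact this.comp continuous_fst
  have hgnn : ∀ p, 0 ≤ g p := by
    intro p
    exact mul_nonneg (sq_nonneg _)
      (mul_nonneg (gaussianPDFReal_nonneg _ _ _) (gaussianPDFReal_nonneg _ _ _))
  -- step 1 : inner integral as density integral
  have step1 : ∀ x : ℝ, ∫ y, Real.tanh (a * x + c * y) ^ 2 ∂γ
      = ∫ u, gaussianPDFReal (a*x) ⟨c^2, sq_nonneg c⟩ u * Real.tanh u ^ 2 :=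
    fun x => integral_comp_affine hc.ne' (a*x) hTc
  rw [integral_congr_ae (ae_of_all _ step1), integral_gaussianReal one_ne_zero]
  -- step 2 : rewrite as double volume integral of g
  have step2 : ∀ x : ℝ, gaussianPDFReal 0 1 x
        * (∫ u, gaussianPDFReal (a*x) ⟨c^2, sq_nonneg c⟩ u * Real.tanh u ^ 2)
      = ∫ u, g (x, u) := by
    intro x
    rw [← integral_const_mul]
    exact integral_congr_ae (ae_of_all _ fun u => by simp only [hg_def]; ring)
  rw [integral_congr_ae (ae_of_all _ step2)]
  -- integrability on the product
  have hgsm : StronglyMeasurable g := hgcont.stronglyMeasurable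
  have hxint : ∀ x : ℝ, Integrable (fun u => g (x, u)) volume := by
    intro x
    simp only [hg_def]
    apply Integrable.bdd_mul (c := 1) ((integrable_gaussianPDFReal (a*x) _).const_mul _)
      hTc.aestronglyMeasurable
    exact ae_of_all _ fun u => by
      rw [Real.norm_eq_abs, abs_of_nonneg (sq_nonneg _)]; exact hT1 u
  have hint : Integrable g (volume.prod volume) := by
    rw [integrable_prod_iff hgsm.aestronglyMeasurable]
    constructor
    · exact ae_of_all _ hxint
    · apply Integrable.mono' (integrable_gaussianPDFReal 0 1)
        hgsm.norm.integral_prod_right'.aestronglyMeasurable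
      refine ae_of_all _ fun x => ?_
      have hnn : (0:ℝ) ≤ ∫ u, ‖g (x, u)‖ := integral_nonneg fun u => norm_nonneg _
      rw [Real.norm_eq_abs, abs_of_nonneg hnn]
      have heq : ∀ u : ℝ, ‖g (x, u)‖ = g (x, u) := fun u => by
        rw [Real.norm_eq_abs, abs_of_nonneg (hgnn _)]
      rw [integral_congr_ae (ae_of_all _ heq)]
      calc ∫ u, g (x, u)
          ≤ ∫ u, gaussianPDFReal 0 1 x * gaussianPDFReal (a*x) ⟨c^2, sq_nonneg c⟩ u := by
            apply integral_mono (hxint x)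
              ((integrable_gaussianPDFReal (a*x) _).const_mul _)
            intro u
            simp only [hg_def]
            have h2 : 0 ≤ gaussianPDFReal 0 1 x * gaussianPDFReal (a*x) ⟨c^2, sq_nonneg c⟩ u :=
              mul_nonneg (gaussianPDFReal_nonneg _ _ _) (gaussianPDFReal_nonneg _ _ _)
            nlinarith [hT1 u, sq_nonneg (Real.tanh u)]
        _ = gaussianPDFReal 0 1 x := by
            rw [integral_const_mul, integral_gaussianPDFReal_eq_one _ hv, mul_one]
  -- swap
  rw [MeasureTheory.integral_integral_swap (f := fun x u => g (x, u)) hint]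
  -- inner evaluation via pdf_conv
  have inner_eq : ∀ u : ℝ, (∫ x, g (x, u))
      = gaussianPDFReal 0 ⟨a^2+c^2, hs.le⟩ u * Real.tanh u ^ 2 := by
    intro u
    calc (∫ x, g (x, u))
        = ∫ x, Real.tanh u ^ 2 *
            (gaussianPDFReal 0 1 x * gaussianPDFReal (a*x) ⟨c^2, sq_nonneg c⟩ u) := rfl
      _ = Real.tanh u ^ 2 * gaussianPDFReal 0 ⟨a^2+c^2, by positivity⟩ u := by
          rw [integral_const_mul, pdf_conv a hc u]
      _ = gaussianPDFReal 0 ⟨a^2+c^2, hs.le⟩ u * Real.tanh u ^ 2 := by rw [mul_comm]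
  rw [integral_congr_ae (ae_of_all _ inner_eq)]
  -- map back
  have hsq : (⟨(Real.sqrt (a^2+c^2))^2, sq_nonneg _⟩ : ℝ≥0) = ⟨a^2+c^2, hs.le⟩ := by
    ext; simp [Real.sq_sqrt hs.le]
  have := integral_comp_affine (c := Real.sqrt (a^2+c^2))
    (Real.sqrt_ne_zero'.mpr hs) 0 hTc
  rw [hsq] at this
  simp only [zero_add] at this
  exact this.symm


noncomputable def Ψ (v : ℝ) : ℝ := ∫ s, Real.tanh (Real.sqrt v * s) ^ 2 ∂γ

lemma integrable_bdd_cont {f : ℝ → ℝ} (hf : Continuous f) (hb : ∀ x, ‖f x‖ ≤ 1) :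
    Integrable f γ := by
  apply Integrable.mono' (integrable_const 1) hf.aestronglyMeasurable
  exact ae_of_all _ hb

lemma norm_tanh_sq_le_one (x : ℝ) : ‖Real.tanh x ^ 2‖ ≤ 1 := by
  rw [Real.norm_eq_abs, abs_of_nonneg (sq_nonneg _)]
  exact (tanh_sq_lt_one x).le

lemma integrable_tanh_comp {g : ℝ → ℝ} (hg : Continuous g) :
    Integrable (fun s => Real.tanh (g s) ^ 2) γ :=
  integrable_bdd_cont ((continuous_tanh.comp hg).pow 2) (fun x => norm_tanh_sq_le_one _)

lemma norm_u_le_one (x : ℝ) : ‖u x‖ ≤ 1 := norm_tanh_sq_le_one _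

lemma integrable_u_comp (v : ℝ) : Integrable (fun s => u (v * s^2)) γ :=
  integrable_bdd_cont (continuous_u.comp (by fun_prop)) (fun x => norm_u_le_one _)

lemma psi_eq_u {v : ℝ} (hv : 0 ≤ v) : Ψ v = ∫ s, u (v * s^2) ∂γ := by
  apply integral_congr_ae (ae_of_all _ fun s => ?_)
  show Real.tanh (Real.sqrt v * s) ^ 2 = u (v * s^2)
  unfold u
  rw [Real.sqrt_mul hv, Real.sqrt_sq_eq_abs]
  rcases le_or_gt 0 s with h | h
  · rw [abs_of_nonneg h]
  · rw [abs_of_neg h, mul_neg, Real.tanh_neg, neg_sq]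

lemma psi_concave : ConcaveOn ℝ (Set.Ici 0) Ψ := by
  refine ⟨convex_Ici 0, fun v hv w hw p q hp hq hpq => ?_⟩
  simp only [smul_eq_mul]
  have hv' : (0:ℝ) ≤ v := hv
  have hw' : (0:ℝ) ≤ w := hw
  rw [psi_eq_u hv', psi_eq_u hw', psi_eq_u (add_nonneg (mul_nonneg hp hv') (mul_nonneg hq hw'))]
  have key : ∀ s : ℝ, p * u (v * s^2) + q * u (w * s^2) ≤ u ((p * v + q * w) * s^2) := by
    intro s
    have h1 := u_concave.2 (Set.mem_Ici.mpr (mul_nonneg hv' (sq_nonneg s)))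
      (Set.mem_Ici.mpr (mul_nonneg hw' (sq_nonneg s))) hp hq hpq
    simp only [smul_eq_mul] at h1
    have h2 : p * (v * s^2) + q * (w * s^2) = (p * v + q * w) * s^2 := by ring
    rwa [h2] at h1
  calc p * (∫ s, u (v * s^2) ∂γ) + q * (∫ s, u (w * s^2) ∂γ)
      = ∫ s, p * u (v * s^2) + q * u (w * s^2) ∂γ := by
        rw [integral_add ((integrable_u_comp v).const_mul p) ((integrable_u_comp w).const_mul q),
          integral_const_mul, integral_const_mul]
    _ ≤ ∫ s, u ((p * v + q * w) * s^2) ∂γ := by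
        apply integral_mono (((integrable_u_comp v).const_mul p).add
          ((integrable_u_comp w).const_mul q)) (integrable_u_comp _) key

lemma psi_lt_one (v : ℝ) : Ψ v < 1 := by
  have hint : Integrable (fun s => Real.tanh (Real.sqrt v * s) ^ 2) γ :=
    integrable_tanh_comp (by fun_prop)
  have hint2 : Integrable (fun s => 1 - Real.tanh (Real.sqrt v * s) ^ 2) γ :=
    (integrable_const 1).sub hint
  have hpos : 0 < ∫ s, (1 - Real.tanh (Real.sqrt v * s) ^ 2) ∂γ := by
    rw [integral_pos_iff_support_of_nonneg _ hint2]
    · have : Function.support (fun s => 1 - Real.tanh (Real.sqrt v * s) ^ 2) = Set.univ := by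
        ext s
        simp only [Function.mem_support, Set.mem_univ, iff_true]
        exact sub_ne_zero.mpr (tanh_sq_lt_one _).ne'
      rw [this]
      simp
    · intro s
      simp only [Pi.zero_apply, sub_nonneg]
      exact (tanh_sq_lt_one _).le
  have heq : ∫ s, (1 - Real.tanh (Real.sqrt v * s) ^ 2) ∂γ = 1 - Ψ v := by
    rw [integral_sub (integrable_const 1) hint]
    simp [Ψ]
  linarith [heq ▸ hpos]

lemma psi_nonneg (v : ℝ) : 0 ≤ Ψ v := integral_nonneg fun s => sq_nonneg _

lemma psi_pos {v : ℝ} (hv : 0 < v) : 0 < Ψ v := by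
  have hint : Integrable (fun s => Real.tanh (Real.sqrt v * s) ^ 2) γ :=
    integrable_tanh_comp (by fun_prop)
  rw [Ψ, integral_pos_iff_support_of_nonneg (fun s => sq_nonneg _) hint]
  have hsub : ({0}ᶜ : Set ℝ) ⊆ Function.support (fun s => Real.tanh (Real.sqrt v * s) ^ 2) := by
    intro s hs
    simp only [Set.mem_compl_iff, Set.mem_singleton_iff] at hs
    simp only [Function.mem_support]
    intro h
    have h1 : Real.tanh (Real.sqrt v * s) = 0 := by
      exact pow_eq_zero_iff (by norm_num) |>.mp h
    rw [Real.tanh_eq_sinh_div_cosh, div_eq_zero_iff] at h1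
    rcases h1 with h1 | h1
    · rw [Real.sinh_eq_zero] at h1
      exact hs (by
        rcases mul_eq_zero.mp h1 with h2 | h2
        · exact absurd h2 (Real.sqrt_ne_zero'.mpr hv)
        · exact h2)
    · exact (Real.cosh_pos _).ne' h1
  have h0 : (γ : Measure ℝ) {0} = 0 :=
    gaussianReal_absolutelyContinuous 0 one_ne_zero (measure_singleton 0)
  have hc : (γ : Measure ℝ) ({0}ᶜ) = 1 := by
    rw [measure_compl (measurableSet_singleton 0) (measure_ne_top _ _), h0,
      measure_univ, tsub_zero]
  calc (0:ℝ≥0∞) < 1 := by norm_num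
    _ = (γ : Measure ℝ) ({0}ᶜ) := hc.symm
    _ ≤ _ := measure_mono hsub


end SK

end SKaux

open SK

/-- For every `β > 0` and `h > 0`, there exists a unique `q > 0` satisfying
`q = E[tanh²(hξ + βz√q)]`; moreover this unique `q` lies in `(0,1)`. -/
theorem stmt_1 (β h : ℝ) (hβ : 0 < β) (hh : 0 < h) :
    (∃! q : ℝ, 0 < q ∧
      q = ∫ ξ, ∫ z, Real.tanh (h * ξ + β * z * Real.sqrt q) ^ 2 ∂γ ∂γ) ∧
    (∀ q : ℝ, 0 < q →
      q = (∫ ξ, ∫ z, Real.tanh (h * ξ + β * z * Real.sqrt q) ^ 2 ∂γ ∂γ) →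
      q ∈ Set.Ioo (0 : ℝ) 1) := by
  -- the double integral equals Ψ (h² + β² q) for q > 0
  have Fq_eq : ∀ q : ℝ, 0 < q →
      (∫ ξ, ∫ z, Real.tanh (h * ξ + β * z * Real.sqrt q) ^ 2 ∂γ ∂γ)
        = Ψ (h^2 + β^2 * q) := by
    intro q hq
    have hc : 0 < β * Real.sqrt q := mul_pos hβ (Real.sqrt_pos.mpr hq)
    have harg : (fun ξ => ∫ z, Real.tanh (h * ξ + β * z * Real.sqrt q) ^ 2 ∂γ)
        = (fun ξ => ∫ z, Real.tanh (h * ξ + (β * Real.sqrt q) * z) ^ 2 ∂γ) := by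
      funext ξ; congr 1; funext z; ring_nf
    show (∫ ξ, (fun ξ => ∫ z, Real.tanh (h * ξ + β * z * Real.sqrt q) ^ 2 ∂γ) ξ ∂γ) = _
    rw [harg]
    have hconv := conv_tanh h hc
    rw [hconv]
    have h2 : h^2 + (β * Real.sqrt q)^2 = h^2 + β^2 * q := by
      rw [mul_pow, Real.sq_sqrt hq.le]
    rw [h2]; rfl
  -- the auxiliary convex function
  set G : ℝ → ℝ := fun q => q - Ψ (h^2 + β^2 * q) with hG_def
  have hGconv : ConvexOn ℝ (Set.Ici 0) G := by
    refine ⟨convex_Ici 0, fun x hx y hy p q hp hq hpq => ?_⟩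
    simp only [hG_def, smul_eq_mul]
    have hmem1 : h^2 + β^2 * x ∈ Set.Ici (0:ℝ) :=
      Set.mem_Ici.mpr (add_nonneg (sq_nonneg h) (mul_nonneg (sq_nonneg β) hx))
    have hmem2 : h^2 + β^2 * y ∈ Set.Ici (0:ℝ) :=
      Set.mem_Ici.mpr (add_nonneg (sq_nonneg h) (mul_nonneg (sq_nonneg β) hy))
    have hkey := psi_concave.2 hmem1 hmem2 hp hq hpq
    simp only [smul_eq_mul] at hkey
    have harg : p * (h^2 + β^2 * x) + q * (h^2 + β^2 * y) = h^2 + β^2 * (p * x + q * y) := by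
      have : p + q = 1 := hpq
      nlinarith [this]
    rw [harg] at hkey
    linarith
  have hG0 : G 0 < 0 := by
    simp only [hG_def]
    have : 0 < Ψ (h^2 + β^2 * 0) := psi_pos (by positivity)
    linarith
  have hG1 : 0 < G 1 := by
    simp only [hG_def]
    have := psi_lt_one (h^2 + β^2 * 1)
    linarith
  -- fixed points of the equation are exactly the zeros of G (for q > 0)
  have hfix : ∀ q : ℝ, 0 < q →
      ((q = ∫ ξ, ∫ z, Real.tanh (h * ξ + β * z * Real.sqrt q) ^ 2 ∂γ ∂γ) ↔ G q = 0) := by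
    intro q hq
    rw [Fq_eq q hq]
    simp only [hG_def]
    constructor
    · intro hqe; rw [← hqe, sub_self]
    · intro hqe; linarith
  -- uniqueness of positive zeros of G
  have huniq_lt : ∀ q1 q2 : ℝ, 0 < q1 → q1 < q2 → G q1 = 0 → G q2 = 0 → False := by
    intro q1 q2 hq1 hlt hz1 hz2
    have hq2 : 0 < q2 := hq1.trans hlt
    have ht0 : 0 < q1 / q2 := div_pos hq1 hq2
    have ht1 : q1 / q2 < 1 := (div_lt_one hq2).mpr hlt
    have hcomb := hGconv.2 (Set.mem_Ici.mpr le_rfl : (0:ℝ) ∈ Set.Ici (0:ℝ))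
      (Set.mem_Ici.mpr hq2.le) (by linarith : (0:ℝ) ≤ 1 - q1/q2) ht0.le (by ring)
    simp only [smul_eq_mul, mul_zero, zero_add] at hcomb
    rw [div_mul_cancel₀ _ hq2.ne'] at hcomb
    rw [hz1, hz2] at hcomb
    have h3 : (0:ℝ) < 1 - q1/q2 := by linarith
    have h4 := mul_neg_of_pos_of_neg h3 hG0
    linarith
  have huniq : ∀ q1 q2 : ℝ, 0 < q1 → 0 < q2 → G q1 = 0 → G q2 = 0 → q1 = q2 := by
    intro q1 q2 hq1 hq2 hz1 hz2
    rcases lt_trichotomy q1 q2 with hlt | heq | hgt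
    · exact absurd (huniq_lt q1 q2 hq1 hlt hz1 hz2) (not_false)
    · exact heq
    · exact absurd (huniq_lt q2 q1 hq2 hgt hz2 hz1) (not_false)
  -- existence via IVT
  obtain ⟨A, hA⟩ : ∃ x : ℝ, x = -G 0 := ⟨_, rfl⟩
  obtain ⟨B, hB⟩ : ∃ x : ℝ, x = G 1 := ⟨_, rfl⟩
  have hApos : 0 < A := by rw [hA]; linarith
  have hBpos : 0 < B := by rw [hB]; exact hG1
  have hG0A : G 0 = -A := by rw [hA]; ring
  obtain ⟨t, ht⟩ : ∃ x : ℝ, x = A / (2*(A+B)) := ⟨_, rfl⟩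
  have htpos : 0 < t := by rw [ht]; positivity
  have htlt : t < 1 := by
    rw [ht, div_lt_one (by positivity)]
    linarith
  have hGt : G t < 0 := by
    have hcomb := hGconv.2 (Set.mem_Ici.mpr le_rfl : (0:ℝ) ∈ Set.Ici (0:ℝ))
      (Set.mem_Ici.mpr zero_le_one) (by linarith : (0:ℝ) ≤ 1 - t) htpos.le (by ring)
    simp only [smul_eq_mul, mul_zero, mul_one, zero_add] at hcomb
    have hexp : (1 - t) * G 0 + t * G 1 = -A + t * (A + B) := by
      rw [hG0A, ← hB]; ring
    have hval : t * (A + B) = A / 2 := by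
      rw [ht]; field_simp
    have hfin : (-A + A/2 : ℝ) < 0 := by linarith
    calc G t ≤ (1 - t) * G 0 + t * G 1 := hcomb
      _ = -A + A / 2 := by rw [hexp, hval]
      _ < 0 := hfin
  have hGcont : ContinuousOn G (Set.Icc t 1) := by
    have h1 : ConvexOn ℝ (Set.Ioi (0:ℝ)) G := hGconv.subset Set.Ioi_subset_Ici_self (convex_Ioi 0)
    exact (h1.continuousOn isOpen_Ioi).mono (fun x hx => lt_of_lt_of_le htpos hx.1)
  obtain ⟨q0, hq0mem, hq0⟩ : ∃ q0 ∈ Set.Icc t 1, G q0 = 0 := by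
    have := intermediate_value_Icc htlt.le hGcont
    have h0mem : (0:ℝ) ∈ Set.Icc (G t) (G 1) := ⟨hGt.le, hG1.le⟩
    obtain ⟨q0, hq0mem, hq0⟩ := this h0mem
    exact ⟨q0, hq0mem, hq0⟩
  have hq0pos : 0 < q0 := lt_of_lt_of_le htpos hq0mem.1
  constructor
  · refine ⟨q0, ⟨hq0pos, (hfix q0 hq0pos).mpr hq0⟩, ?_⟩
    rintro y ⟨hypos, hyfix⟩
    exact huniq y q0 hypos hq0pos ((hfix y hypos).mp hyfix) hq0
  · intro q hqpos hqfix
    refine ⟨hqpos, ?_⟩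
    rw [hqfix, Fq_eq q hqpos]
    exact psi_lt_one _
end

section
/- Fix β > 0, h > 0 and q ∈ [0,1). For s ∈ (q,1) set Y(s) = hξ + βz√q + βz'√(s−q). Then the function s ↦ E[ E'[tanh²(Y(s))·cosh(Y(s))] / E'[cosh(Y(s))] ] is differentiable on (q,1) and its derivative at s equals β² · E[ E'[cosh⁻³(Y(s))] / E'[cosh(Y(s))] ]. -/
open MeasureTheory Real

local notation "γ" => ProbabilityTheory.gaussianReal 0 1

open ProbabilityTheory
open scoped ENNReal NNReal
set_option maxHeartbeats 1000000

noncomputable def φ (x : ℝ) : ℝ := gaussianPDFReal 0 1 x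

lemma φ_def (x : ℝ) : φ x = (Real.sqrt (2*π))⁻¹ * Real.exp (-(x^2/2)) := by
  simp only [φ, gaussianPDFReal]
  norm_num
  left
  ring_nf

lemma φ_nonneg (x : ℝ) : 0 ≤ φ x := gaussianPDFReal_nonneg 0 1 x

lemma integrable_φ : Integrable φ := integrable_gaussianPDFReal 0 1

lemma hasDerivAt_φ (x : ℝ) : HasDerivAt φ (-x * φ x) x := by
  have h1 : HasDerivAt (fun x : ℝ => -(x^2/2)) (-x) x := by
    have := ((hasDerivAt_pow 2 x).div_const 2).neg
    exact this.congr_deriv (by ring)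
  have h2 := (h1.exp).const_mul (Real.sqrt (2*π))⁻¹
  have : (fun x : ℝ => (Real.sqrt (2*π))⁻¹ * Real.exp (-(x^2/2))) = φ := by
    ext y; rw [φ_def]
  rw [this] at h2
  refine h2.congr_deriv ?_
  rw [φ_def]; ring

lemma integral_gauss (f : ℝ → ℝ) : ∫ x, f x ∂γ = ∫ x, f x * φ x := by
  rw [gaussianReal_of_var_ne_zero 0 one_ne_zero]
  have hmeas : Measurable (fun x => (gaussianPDFReal 0 1 x).toNNReal) :=
    (measurable_gaussianPDFReal 0 1).real_toNNReal
  have : (volume.withDensity (gaussianPDF 0 1))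
      = volume.withDensity (fun x => ((gaussianPDFReal 0 1 x).toNNReal : ℝ≥0∞)) := rfl
  rw [this, integral_withDensity_eq_integral_smul hmeas f]
  congr 1; ext x
  have h := Real.coe_toNNReal _ (gaussianPDFReal_nonneg 0 1 x)
  rw [NNReal.smul_def, h, mul_comm]
  rfl

lemma integrable_gauss_iff (f : ℝ → ℝ) :
    Integrable f γ ↔ Integrable (fun x => f x * φ x) := by
  rw [gaussianReal_of_var_ne_zero 0 one_ne_zero]
  rw [integrable_withDensity_iff (measurable_gaussianPDF 0 1) (by
    filter_upwards with x; exact ENNReal.ofReal_lt_top)]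
  constructor <;> intro h <;> [skip; skip] <;>
  · apply h.congr
    filter_upwards with x
    simp only [gaussianPDF, φ, ENNReal.toReal_ofReal (gaussianPDFReal_nonneg 0 1 x)]

lemma measurable_φ : Measurable φ := measurable_gaussianPDFReal 0 1

lemma exp_mul_φ (b x : ℝ) :
    Real.exp (b*x) * φ x = Real.exp (b^2/2) * ((Real.sqrt (2*π))⁻¹ * Real.exp (-(1/2) * (x-b)^2)) := by
  rw [φ_def]
  rw [show rexp (b*x) * ((√(2*π))⁻¹ * rexp (-(x^2/2))) = (√(2*π))⁻¹ * (rexp (b*x) * rexp (-(x^2/2))) from by ring,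
      show rexp (b^2/2) * ((√(2*π))⁻¹ * rexp (-(1/2)*(x-b)^2)) = (√(2*π))⁻¹ * (rexp (b^2/2) * rexp (-(1/2)*(x-b)^2)) from by ring,
      ← Real.exp_add, ← Real.exp_add]
  congr 1
  ring

lemma integrable_exp_gauss (b : ℝ) : Integrable (fun x => Real.exp (b*x)) γ := by
  rw [integrable_gauss_iff]
  have h : Integrable (fun x : ℝ => Real.exp (-(1/2) * (x-b)^2)) :=
    (integrable_exp_neg_mul_sq (by norm_num : (0:ℝ) < 1/2)).comp_sub_right b
  have := ((h.const_mul (Real.sqrt (2*π))⁻¹).const_mul (Real.exp (b^2/2)))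
  exact this.congr (by filter_upwards with x; rw [exp_mul_φ b x])

lemma integral_exp_gauss (b : ℝ) : ∫ x, Real.exp (b*x) ∂γ = Real.exp (b^2/2) := by
  rw [integral_gauss]
  have h1 : ∀ x : ℝ, Real.exp (b*x) * φ x
      = Real.exp (b^2/2) * ((Real.sqrt (2*π))⁻¹ * Real.exp (-(1/2) * (x-b)^2)) := exp_mul_φ b
  rw [integral_congr_ae (ae_of_all _ h1), integral_const_mul, integral_const_mul]
  have h2 : ∫ x : ℝ, Real.exp (-(1/2) * (x-b)^2) = Real.sqrt (2*π) := by
    rw [integral_sub_right_eq_self (fun x => Real.exp (-(1/2) * x^2)) b]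
    rw [integral_gaussian (1/2 : ℝ)]
    norm_num
    rw [mul_comm]
  rw [h2]
  have : Real.sqrt (2*π) ≠ 0 := by positivity
  field_simp

lemma integrable_cosh_gauss (a u : ℝ) : Integrable (fun x => Real.cosh (a + u*x)) γ := by
  have h := (((integrable_exp_gauss u).const_mul (Real.exp a)).add
    ((integrable_exp_gauss (-u)).const_mul (Real.exp (-a)))).div_const 2
  exact h.congr (by
    filter_upwards with x
    simp only [Pi.add_apply]
    rw [Real.cosh_eq, ← Real.exp_add, ← Real.exp_add]
    ring_nf)

lemma integral_cosh_gauss (a u : ℝ) :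
    ∫ x, Real.cosh (a + u*x) ∂γ = Real.cosh a * Real.exp (u^2/2) := by
  have h : ∀ x : ℝ, Real.cosh (a + u*x)
      = (Real.exp a * Real.exp (u*x) + Real.exp (-a) * Real.exp ((-u)*x))/2 := by
    intro x
    rw [Real.cosh_eq, ← Real.exp_add, ← Real.exp_add]
    ring_nf
  rw [integral_congr_ae (ae_of_all _ h)]
  rw [integral_div, integral_add (((integrable_exp_gauss u).const_mul (Real.exp a)))
    (((integrable_exp_gauss (-u)).const_mul (Real.exp (-a)))),
    integral_const_mul, integral_const_mul, integral_exp_gauss, integral_exp_gauss,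
    Real.cosh_eq]
  have : (-u)^2 = u^2 := by ring
  rw [this]
  ring

lemma integrable_bdd {f : ℝ → ℝ} (C : ℝ) (hm : AEStronglyMeasurable f γ)
    (hb : ∀ x, |f x| ≤ C) : Integrable f γ :=
  (integrable_const C).mono' hm (ae_of_all _ hb)

lemma integrable_abs_mul_φ : Integrable (fun x => |x| * φ x) := by
  have h : Integrable (fun x : ℝ => x * Real.exp (-(1/2) * x^2)) :=
    integrable_mul_exp_neg_mul_sq (by norm_num)
  have h2 := (h.const_mul (Real.sqrt (2*π))⁻¹).abs
  exact h2.congr (by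
    filter_upwards with x
    rw [φ_def, abs_mul, abs_mul, abs_of_nonneg (Real.exp_nonneg _), abs_of_nonneg (by positivity : (0:ℝ) ≤ (Real.sqrt (2*π))⁻¹)]
    ring_nf)

lemma stein (g g' : ℝ → ℝ) (hd : ∀ x, HasDerivAt g (g' x) x)
    (hgc : Continuous g) (hg'c : Continuous g') (M M' : ℝ)
    (hg : ∀ x, |g x| ≤ M) (hg' : ∀ x, |g' x| ≤ M') :
    ∫ x, x * g x ∂γ = ∫ x, g' x ∂γ := by
  rw [integral_gauss, integral_gauss]
  have hF : ∀ x, HasDerivAt (fun y => g y * φ y) (g' x * φ x + g x * (-x * φ x)) x :=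
    fun x => (hd x).mul (hasDerivAt_φ x)
  have hi1 : Integrable (fun x => g' x * φ x) := by
    refine (integrable_φ.const_mul M').mono' (hg'c.aestronglyMeasurable.mul measurable_φ.aestronglyMeasurable) ?_
    filter_upwards with x
    rw [norm_mul, norm_of_nonneg (φ_nonneg x)]
    exact mul_le_mul_of_nonneg_right (hg' x) (φ_nonneg x)
  have hi2 : Integrable (fun x => g x * (-x * φ x)) := by
    refine (integrable_abs_mul_φ.const_mul M).mono' ?_ ?_
    · exact hgc.aestronglyMeasurable.mul (((measurable_id.neg).mul measurable_φ).aestronglyMeasurable)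
    · filter_upwards with x
      rw [norm_mul, norm_mul, norm_neg, norm_of_nonneg (φ_nonneg x), Real.norm_eq_abs, Real.norm_eq_abs]
      exact mul_le_mul_of_nonneg_right (hg x) (mul_nonneg (abs_nonneg x) (φ_nonneg x))
  have hFint : Integrable (fun x => g x * φ x) := by
    refine (integrable_φ.const_mul M).mono' (hgc.aestronglyMeasurable.mul measurable_φ.aestronglyMeasurable) ?_
    filter_upwards with x
    rw [norm_mul, norm_of_nonneg (φ_nonneg x)]
    exact mul_le_mul_of_nonneg_right (hg x) (φ_nonneg x)
  have h0 := integral_eq_zero_of_hasDerivAt_of_integrable hF (hi1.add hi2) hFint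
  rw [integral_add hi1 hi2] at h0
  have h3 : ∫ x, g x * (-x * φ x) = - ∫ x, x * g x * φ x := by
    rw [← integral_neg]
    congr 1; ext x; ring
  rw [h3] at h0
  have := sub_eq_zero.mpr h0.symm
  have h4 : ∫ x, g' x * φ x = ∫ x, x * g x * φ x := by linarith
  rw [← h4]

-- sech facts
lemma hasDerivAt_sech (y : ℝ) :
    HasDerivAt (fun y => (Real.cosh y)⁻¹) (-(Real.sinh y / Real.cosh y ^ 2)) y := by
  exact ((Real.hasDerivAt_cosh y).inv (Real.cosh_pos y).ne').congr_deriv (by ring)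

lemma hasDerivAt_sech' (y : ℝ) :
    HasDerivAt (fun y => -(Real.sinh y / Real.cosh y ^ 2))
      ((Real.cosh y)⁻¹ - 2 * ((Real.cosh y)⁻¹)^3) y := by
  have hc := Real.cosh_pos y
  have h := (((Real.hasDerivAt_sinh y).div ((Real.hasDerivAt_cosh y).pow 2) (pow_ne_zero 2 (Real.cosh_pos y).ne'))).neg
  have hs : Real.sinh y ^ 2 = Real.cosh y ^2 - 1 := Real.sinh_sq y
  refine h.congr_deriv (Eq.symm ?_)
  have hc' : Real.cosh y ≠ 0 := hc.ne'
  simp only [Pi.pow_apply]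
  field_simp
  ring_nf
  linear_combination (-2 * Real.cosh y) * hs

lemma abs_sech_le (y : ℝ) : |(Real.cosh y)⁻¹| ≤ 1 := by
  rw [abs_of_nonneg (by positivity)]
  rw [inv_le_one_iff₀]
  right; exact Real.one_le_cosh y

lemma abs_sinh_le_cosh (y : ℝ) : |Real.sinh y| ≤ Real.cosh y := by
  have h := Real.sinh_sq y
  have hc := Real.cosh_pos y
  nlinarith [abs_nonneg (Real.sinh y), sq_abs (Real.sinh y), abs_nonneg (Real.sinh y)]

lemma abs_sech'_le (y : ℝ) : |-(Real.sinh y / Real.cosh y ^ 2)| ≤ 1 := by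
  have hc := Real.cosh_pos y
  have h1 := Real.one_le_cosh y
  rw [abs_neg, abs_div, abs_of_nonneg (by positivity : (0:ℝ) ≤ Real.cosh y ^2)]
  rw [div_le_one (by positivity)]
  calc |Real.sinh y| ≤ Real.cosh y := abs_sinh_le_cosh y
    _ ≤ Real.cosh y ^ 2 := by nlinarith

lemma abs_sech''_le (y : ℝ) : |(Real.cosh y)⁻¹ - 2 * ((Real.cosh y)⁻¹)^3| ≤ 3 := by
  have h1 := abs_sech_le y
  calc |(Real.cosh y)⁻¹ - 2 * ((Real.cosh y)⁻¹)^3|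
      ≤ |(Real.cosh y)⁻¹| + |2 * ((Real.cosh y)⁻¹)^3| := abs_sub _ _
    _ ≤ 1 + 2 := by
        apply add_le_add h1
        rw [abs_mul, abs_pow]
        have : |(Real.cosh y)⁻¹|^3 ≤ 1 := by
          calc |(Real.cosh y)⁻¹|^3 ≤ 1^3 := pow_le_pow_left₀ (abs_nonneg _) h1 3
            _ = 1 := one_pow 3
        rw [abs_two]
        nlinarith
    _ = 3 := by norm_num

lemma continuous_sech : Continuous (fun y => (Real.cosh y)⁻¹) :=
  Real.continuous_cosh.inv₀ (fun y => (Real.cosh_pos y).ne')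

lemma continuous_sech' : Continuous (fun y => -(Real.sinh y / Real.cosh y ^ 2)) :=
  (Real.continuous_sinh.div (Real.continuous_cosh.pow 2)
    (fun y => pow_ne_zero 2 (Real.cosh_pos y).ne')).neg

lemma continuous_sech'' : Continuous (fun y => (Real.cosh y)⁻¹ - 2 * ((Real.cosh y)⁻¹)^3) :=
  continuous_sech.sub (continuous_const.mul (continuous_sech.pow 3))

lemma stein_sech (a u : ℝ) :
    ∫ x, x * -(Real.sinh (a+u*x) / Real.cosh (a+u*x) ^ 2) ∂γ
      = u * ∫ x, ((Real.cosh (a+u*x))⁻¹ - 2 * ((Real.cosh (a+u*x))⁻¹)^3) ∂γ := by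
  have hlin : ∀ x : ℝ, HasDerivAt (fun x : ℝ => a + u*x) u x := by
    intro x
    simpa using ((hasDerivAt_id x).const_mul u).const_add a
  have hd : ∀ x, HasDerivAt (fun x => -(Real.sinh (a+u*x) / Real.cosh (a+u*x) ^ 2))
      (u * ((Real.cosh (a+u*x))⁻¹ - 2 * ((Real.cosh (a+u*x))⁻¹)^3)) x := by
    intro x
    have := (hasDerivAt_sech' (a+u*x)).comp x (hlin x)
    exact this.congr_deriv (by ring)
  rw [stein _ _ hd
    (continuous_sech'.comp (continuous_const.add (continuous_const.mul continuous_id)))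
    (continuous_const.mul (continuous_sech''.comp (continuous_const.add (continuous_const.mul continuous_id))))
    1 (|u| * 3)
    (fun x => abs_sech'_le _)
    (fun x => by
      rw [abs_mul]
      exact mul_le_mul_of_nonneg_left (abs_sech''_le _) (abs_nonneg u))]
  exact integral_const_mul u _

lemma integrable_abs_gauss : Integrable (fun x : ℝ => |x|) γ := by
  rw [integrable_gauss_iff]; exact integrable_abs_mul_φ

lemma cont_aux (a u : ℝ) {g : ℝ → ℝ} (hg : Continuous g) :
    Continuous (fun x => g (a + u*x)) :=
  hg.comp (continuous_const.add (continuous_const.mul continuous_id))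

lemma cont_aux2 (a u : ℝ) {g : ℝ → ℝ} (hg : Continuous g) :
    Continuous (fun x => g (a + x*u)) :=
  hg.comp (continuous_const.add (continuous_id.mul continuous_const))

lemma hasDerivAt_M (a u : ℝ) :
    HasDerivAt (fun v => ∫ x, (Real.cosh (a + v*x))⁻¹ ∂γ)
      (u * ∫ x, ((Real.cosh (a+u*x))⁻¹ - 2*((Real.cosh (a+u*x))⁻¹)^3) ∂γ) u := by
  have h1 : ∀ᶠ v in nhds u, AEStronglyMeasurable
      (fun x => (Real.cosh (a + v*x))⁻¹) γ := by
    filter_upwards with v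
    exact (cont_aux a v continuous_sech).aestronglyMeasurable
  have h2 : Integrable (fun x => (Real.cosh (a + u*x))⁻¹) γ :=
    integrable_bdd 1 (cont_aux a u continuous_sech).aestronglyMeasurable
      (fun x => abs_sech_le _)
  have h3 : AEStronglyMeasurable
      (fun x => x * -(Real.sinh (a+u*x) / Real.cosh (a+u*x) ^ 2)) γ :=
    (continuous_id.mul (cont_aux a u continuous_sech')).aestronglyMeasurable
  have h4 : ∀ᵐ x ∂γ, ∀ v ∈ Metric.ball u 1,
      ‖x * -(Real.sinh (a+v*x) / Real.cosh (a+v*x) ^ 2)‖ ≤ |x| := by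
    filter_upwards with x v _
    rw [Real.norm_eq_abs, abs_mul]
    calc |x| * |(-(Real.sinh (a+v*x) / Real.cosh (a+v*x) ^ 2))| ≤ |x| * 1 :=
          mul_le_mul_of_nonneg_left (abs_sech'_le _) (abs_nonneg x)
      _ = |x| := mul_one _
  have h5 : ∀ᵐ x ∂γ, ∀ v ∈ Metric.ball u 1,
      HasDerivAt (fun v => (Real.cosh (a + v*x))⁻¹)
        (x * -(Real.sinh (a+v*x) / Real.cosh (a+v*x) ^ 2)) v := by
    filter_upwards with x v _
    have hlin : HasDerivAt (fun v : ℝ => a + v*x) x v := by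
      simpa using ((hasDerivAt_id v).mul_const x).const_add a
    have := (hasDerivAt_sech (a+v*x)).comp v hlin
    exact this.congr_deriv (by ring)
  have key := (hasDerivAt_integral_of_dominated_loc_of_deriv_le (Metric.ball_mem_nhds u one_pos) h1 h2 h3 h4
    integrable_abs_gauss h5).2
  rw [← stein_sech a u]
  exact key

-- ### stage 4
lemma integrable_sech_gauss (a u : ℝ) : Integrable (fun x => (Real.cosh (a+u*x))⁻¹) γ :=
  integrable_bdd 1 (cont_aux a u continuous_sech).aestronglyMeasurable (fun x => abs_sech_le _)

lemma integrable_sech3_gauss (a u : ℝ) :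
    Integrable (fun x => ((Real.cosh (a+u*x))⁻¹)^3) γ := by
  refine integrable_bdd 1 ((cont_aux a u continuous_sech).pow 3).aestronglyMeasurable ?_
  intro x
  rw [abs_pow]
  calc |(Real.cosh (a+u*x))⁻¹|^3 ≤ 1^3 := pow_le_pow_left₀ (abs_nonneg _) (abs_sech_le _) 3
    _ = 1 := one_pow 3

lemma abs_integral_le_one {f : ℝ → ℝ} (hb : ∀ x, |f x| ≤ 1) : |∫ x, f x ∂γ| ≤ 1 := by
  have := norm_integral_le_of_norm_le_const (μ := γ) (f := f) (C := (1:ℝ))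
    (ae_of_all _ (fun x => by simpa using hb x))
  simpa using this

lemma integral_sech_sub (a u : ℝ) :
    ∫ x, ((Real.cosh (a+u*x))⁻¹ - 2*((Real.cosh (a+u*x))⁻¹)^3) ∂γ
      = (∫ x, (Real.cosh (a+u*x))⁻¹ ∂γ) - 2 * ∫ x, ((Real.cosh (a+u*x))⁻¹)^3 ∂γ := by
  rw [integral_sub (integrable_sech_gauss a u) ((integrable_sech3_gauss a u).const_mul 2),
    integral_const_mul]

-- derivative of t ↦ β√(t−q) at s (s > q)
lemma hasDerivAt_c {β q s : ℝ} (hs : q < s) :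
    HasDerivAt (fun t => β * Real.sqrt (t - q)) (β / (2 * Real.sqrt (s - q))) s := by
  have hne : s - q ≠ 0 := sub_ne_zero.mpr hs.ne'
  have h1 : HasDerivAt (fun t : ℝ => t - q) 1 s := (hasDerivAt_id s).sub_const q
  have h2 := (Real.hasDerivAt_sqrt hne).comp s h1
  have h3 := h2.const_mul β
  refine h3.congr_deriv (Eq.symm ?_)
  simp
  ring

/-- derivative of the composite `G` in `t` -/
lemma hasDerivAt_G (β q a : ℝ) {s : ℝ} (hs : q < s) :
    HasDerivAt (fun t => Real.exp (-(β^2*(t-q))/2) * (Real.cosh a)⁻¹ *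
        ∫ x, (Real.cosh (a + (β*Real.sqrt (t-q))*x))⁻¹ ∂γ)
      (-(β^2) * Real.exp (-(β^2*(s-q))/2) * (Real.cosh a)⁻¹ *
        ∫ x, ((Real.cosh (a + (β*Real.sqrt (s-q))*x))⁻¹)^3 ∂γ) s := by
  have hsq : (0:ℝ) < s - q := sub_pos.mpr hs
  have hsqrt : Real.sqrt (s - q) ≠ 0 := by positivity
  -- derivative of e(t) = exp(−β²(t−q)/2)
  have he : HasDerivAt (fun t => Real.exp (-(β^2*(t-q))/2))
      (-(β^2)/2 * Real.exp (-(β^2*(s-q))/2)) s := by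
    have h1 : HasDerivAt (fun t : ℝ => -(β^2*(t-q))/2) (-(β^2)/2) s := by
      have : HasDerivAt (fun t : ℝ => t - q) 1 s := (hasDerivAt_id s).sub_const q
      have h2 := ((this.const_mul (β^2)).neg).div_const 2
      simpa using h2
    simpa [mul_comm] using h1.exp
  -- derivative of K(t) = ∫ sech(a + c(t) x)
  have hK : HasDerivAt (fun t => ∫ x, (Real.cosh (a + (β*Real.sqrt (t-q))*x))⁻¹ ∂γ)
      (β^2/2 * ((∫ x, (Real.cosh (a + (β*Real.sqrt (s-q))*x))⁻¹ ∂γ)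
        - 2 * ∫ x, ((Real.cosh (a + (β*Real.sqrt (s-q))*x))⁻¹)^3 ∂γ)) s := by
    have h1 := (hasDerivAt_M a (β*Real.sqrt (s-q))).comp s (hasDerivAt_c (β := β) hs)
    have h2 : (β*Real.sqrt (s-q)) * (β / (2 * Real.sqrt (s-q))) = β^2/2 := by
      field_simp
    rw [integral_sech_sub] at h1
    refine h1.congr_deriv (Eq.symm ?_)
    rw [← h2]
    ring
  have hprod := (he.mul_const ((Real.cosh a)⁻¹)).mul hK
  refine hprod.congr_deriv (Eq.symm ?_)
  ring

-- ### stage 5 : ratio identity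
lemma tanh_sq_cosh (y : ℝ) :
    Real.tanh y ^ 2 * Real.cosh y = Real.cosh y - (Real.cosh y)⁻¹ := by
  have hc : Real.cosh y ≠ 0 := (Real.cosh_pos y).ne'
  rw [Real.tanh_eq_sinh_div_cosh]
  have hs : Real.sinh y ^ 2 = Real.cosh y ^2 - 1 := Real.sinh_sq y
  field_simp
  linear_combination hs

lemma ratio_eq (a u : ℝ) :
    (∫ x, Real.tanh (a + u*x) ^2 * Real.cosh (a + u*x) ∂γ)
      / (∫ x, Real.cosh (a+u*x) ∂γ)
    = 1 - Real.exp (-(u^2)/2) * (Real.cosh a)⁻¹ * ∫ x, (Real.cosh (a+u*x))⁻¹ ∂γ := by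
  have hc : Real.cosh a ≠ 0 := (Real.cosh_pos a).ne'
  have hexp : Real.exp (u^2/2) ≠ 0 := Real.exp_ne_zero _
  have hnum : ∫ x, Real.tanh (a + u*x) ^2 * Real.cosh (a + u*x) ∂γ
      = (∫ x, Real.cosh (a+u*x) ∂γ) - ∫ x, (Real.cosh (a+u*x))⁻¹ ∂γ := by
    rw [← integral_sub (integrable_cosh_gauss a u) (integrable_sech_gauss a u)]
    exact integral_congr_ae (ae_of_all _ (fun x => tanh_sq_cosh (a+u*x)))
  rw [hnum, integral_cosh_gauss, sub_div, div_self (mul_ne_zero hc hexp)]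
  congr 1
  rw [div_eq_mul_inv, mul_inv, show -(u^2)/2 = -(u^2/2) from by ring, Real.exp_neg]
  ring

-- ### stage 6 : continuity in the parameter a
lemma cont_M (u : ℝ) {g : ℝ → ℝ} (hgc : Continuous g) (hgb : ∀ y, |g y| ≤ 1) :
    Continuous (fun a => ∫ x, g (a + u*x) ∂γ) := by
  apply continuous_of_dominated (bound := fun _ => (1:ℝ))
  · exact fun a => (cont_aux a u hgc).aestronglyMeasurable
  · exact fun a => ae_of_all _ (fun x => by simpa using hgb (a + u*x))
  · exact integrable_const 1
  · exact ae_of_all _ (fun x => hgc.comp (continuous_id.add continuous_const))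

-- ### stage 7
lemma abs_sech3_le (y : ℝ) : |((Real.cosh y)⁻¹)^3| ≤ 1 := by
  rw [abs_pow]
  calc |(Real.cosh y)⁻¹|^3 ≤ 1^3 := pow_le_pow_left₀ (abs_nonneg _) (abs_sech_le _) 3
    _ = 1 := one_pow 3

noncomputable def Gfun (β q t a : ℝ) : ℝ :=
  Real.exp (-(β^2*(t-q))/2) * (Real.cosh a)⁻¹ *
    ∫ x, (Real.cosh (a + (β*Real.sqrt (t-q))*x))⁻¹ ∂γ

noncomputable def Dfun (β q t a : ℝ) : ℝ :=
  -(β^2) * Real.exp (-(β^2*(t-q))/2) * (Real.cosh a)⁻¹ *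
    ∫ x, ((Real.cosh (a + (β*Real.sqrt (t-q))*x))⁻¹)^3 ∂γ

lemma hasDerivAt_Gfun (β q a : ℝ) {s : ℝ} (hs : q < s) :
    HasDerivAt (fun t => Gfun β q t a) (Dfun β q s a) s := hasDerivAt_G β q a hs

lemma abs_exp_part_le' (β q t : ℝ) :
    |Real.exp (-(β^2*(t-q))/2)| ≤ Real.exp (β^2*|t-q|/2) := by
  rw [abs_of_nonneg (Real.exp_nonneg _)]
  apply Real.exp_le_exp.mpr
  calc -(β^2*(t-q))/2 ≤ |(-(β^2*(t-q))/2)| := le_abs_self _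
    _ = β^2*|t-q|/2 := by
        rw [abs_div, abs_neg, abs_mul, abs_of_nonneg (sq_nonneg β)]
        norm_num

lemma one_le_Ebound (β q t : ℝ) : (1:ℝ) ≤ Real.exp (β^2*|t-q|/2) := by
  rw [show (1:ℝ) = Real.exp 0 from (Real.exp_zero).symm]
  apply Real.exp_le_exp.mpr
  positivity

lemma abs_Gfun_le' (β q t a : ℝ) : |Gfun β q t a| ≤ Real.exp (β^2*|t-q|/2) := by
  have h1 := abs_exp_part_le' β q t
  have h2 := abs_sech_le a
  have h3 := abs_integral_le_one (f := fun x => (Real.cosh (a + (β*Real.sqrt (t-q))*x))⁻¹)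
    (fun x => abs_sech_le _)
  rw [Gfun, abs_mul, abs_mul]
  have hE := Real.exp_nonneg (β^2*|t-q|/2)
  calc |Real.exp (-(β^2*(t-q))/2)| * |(Real.cosh a)⁻¹| *
        |∫ x, (Real.cosh (a + (β*Real.sqrt (t-q))*x))⁻¹ ∂γ|
      ≤ (Real.exp (β^2*|t-q|/2) * 1) * 1 := by
        apply mul_le_mul (mul_le_mul h1 h2 (abs_nonneg _) hE) h3 (abs_nonneg _)
        positivity
    _ = Real.exp (β^2*|t-q|/2) := by ring

lemma abs_exp_part_le (β q t : ℝ) (ht : q ≤ t) : |Real.exp (-(β^2*(t-q))/2)| ≤ 1 := by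
  rw [abs_of_nonneg (Real.exp_nonneg _)]
  apply Real.exp_le_one_iff.mpr
  have : (0:ℝ) ≤ β^2*(t-q) := mul_nonneg (sq_nonneg β) (sub_nonneg.mpr ht)
  linarith

lemma abs_Gfun_le (β q t a : ℝ) (ht : q ≤ t) : |Gfun β q t a| ≤ 1 := by
  have h1 := abs_exp_part_le β q t ht
  have h2 := abs_sech_le a
  have h3 := abs_integral_le_one (f := fun x => (Real.cosh (a + (β*Real.sqrt (t-q))*x))⁻¹)
    (fun x => abs_sech_le _)
  rw [Gfun, abs_mul, abs_mul]
  calc |Real.exp (-(β^2*(t-q))/2)| * |(Real.cosh a)⁻¹| *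
        |∫ x, (Real.cosh (a + (β*Real.sqrt (t-q))*x))⁻¹ ∂γ|
      ≤ (1 * 1) * 1 := by
        apply mul_le_mul (mul_le_mul h1 h2 (abs_nonneg _) zero_le_one) h3 (abs_nonneg _)
        norm_num
    _ = 1 := by norm_num

lemma abs_Dfun_le (β q t a : ℝ) (ht : q ≤ t) : |Dfun β q t a| ≤ β^2 := by
  have h1 := abs_exp_part_le β q t ht
  have h2 := abs_sech_le a
  have h3 := abs_integral_le_one (f := fun x => ((Real.cosh (a + (β*Real.sqrt (t-q))*x))⁻¹)^3)
    (fun x => abs_sech3_le _)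
  rw [Dfun, abs_mul, abs_mul, abs_mul, abs_neg, abs_of_nonneg (sq_nonneg β)]
  calc β^2 * |Real.exp (-(β^2*(t-q))/2)| * |(Real.cosh a)⁻¹| *
        |∫ x, ((Real.cosh (a + (β*Real.sqrt (t-q))*x))⁻¹)^3 ∂γ|
      ≤ ((β^2 * 1) * 1) * 1 := by
        apply mul_le_mul _ h3 (abs_nonneg _) (by positivity)
        apply mul_le_mul _ h2 (abs_nonneg _) (by positivity)
        exact mul_le_mul_of_nonneg_left h1 (sq_nonneg β)
    _ = β^2 := by ring

lemma abs_Dfun_le' (β q t a : ℝ) : |Dfun β q t a| ≤ β^2 * Real.exp (β^2*|t-q|/2) := by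
  have h1 := abs_exp_part_le' β q t
  have h2 := abs_sech_le a
  have h3 := abs_integral_le_one (f := fun x => ((Real.cosh (a + (β*Real.sqrt (t-q))*x))⁻¹)^3)
    (fun x => abs_sech3_le _)
  rw [Dfun, abs_mul, abs_mul, abs_mul, abs_neg, abs_of_nonneg (sq_nonneg β)]
  have hE := Real.exp_nonneg (β^2*|t-q|/2)
  calc β^2 * |Real.exp (-(β^2*(t-q))/2)| * |(Real.cosh a)⁻¹| *
        |∫ x, ((Real.cosh (a + (β*Real.sqrt (t-q))*x))⁻¹)^3 ∂γ|
      ≤ ((β^2 * Real.exp (β^2*|t-q|/2)) * 1) * 1 := by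
        apply mul_le_mul _ h3 (abs_nonneg _) (by positivity)
        apply mul_le_mul _ h2 (abs_nonneg _) (by positivity)
        exact mul_le_mul_of_nonneg_left h1 (sq_nonneg β)
    _ = β^2 * Real.exp (β^2*|t-q|/2) := by ring

lemma cont_Gfun_a (β q t : ℝ) : Continuous (fun a => Gfun β q t a) := by
  apply (continuous_const.mul continuous_sech).mul
  exact cont_M (β*Real.sqrt (t-q)) continuous_sech abs_sech_le

lemma cont_Dfun_a (β q t : ℝ) : Continuous (fun a => Dfun β q t a) := by
  apply (continuous_const.mul continuous_sech).mul
  exact cont_M (β*Real.sqrt (t-q)) (continuous_sech.pow 3) abs_sech3_le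

lemma ball_subset_gt {t q v : ℝ} (ht : q < t) (hv : v ∈ Metric.ball t (t - q)) : q < v := by
  rw [Metric.mem_ball, Real.dist_eq, abs_lt] at hv
  linarith [hv.1]

lemma layer1 (β h q ξ : ℝ) {t : ℝ} (ht : q < t) :
    HasDerivAt (fun t => ∫ z, (1 - Gfun β q t (h*ξ + β*z*Real.sqrt q)) ∂γ)
      (∫ z, -(Dfun β q t (h*ξ + β*z*Real.sqrt q)) ∂γ) t := by
  have contA : Continuous (fun z : ℝ => h*ξ + β*z*Real.sqrt q) :=
    continuous_const.add ((continuous_const.mul continuous_id).mul continuous_const)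
  have h1 : ∀ᶠ v in nhds t, AEStronglyMeasurable
      (fun z => 1 - Gfun β q v (h*ξ + β*z*Real.sqrt q)) γ := by
    filter_upwards with v
    exact (continuous_const.sub ((cont_Gfun_a β q v).comp contA)).aestronglyMeasurable
  have h2 : Integrable (fun z => 1 - Gfun β q t (h*ξ + β*z*Real.sqrt q)) γ := by
    refine integrable_bdd (1 + Real.exp (β^2*|t-q|/2))
      (continuous_const.sub ((cont_Gfun_a β q t).comp contA)).aestronglyMeasurable ?_
    intro z
    calc |1 - Gfun β q t (h*ξ + β*z*Real.sqrt q)|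
        ≤ |(1:ℝ)| + |Gfun β q t (h*ξ + β*z*Real.sqrt q)| := abs_sub _ _
      _ ≤ 1 + Real.exp (β^2*|t-q|/2) := by
          rw [abs_one]
          exact add_le_add_right (abs_Gfun_le' β q t _) 1
  have h3 : AEStronglyMeasurable (fun z => -(Dfun β q t (h*ξ + β*z*Real.sqrt q))) γ :=
    ((cont_Dfun_a β q t).comp contA).neg.aestronglyMeasurable
  have h4 : ∀ᵐ z ∂γ, ∀ v ∈ Metric.ball t (t - q),
      ‖-(Dfun β q v (h*ξ + β*z*Real.sqrt q))‖ ≤ β^2 := by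
    filter_upwards with z v hv
    rw [Real.norm_eq_abs, abs_neg]
    exact abs_Dfun_le β q v _ (ball_subset_gt ht hv).le
  have h5 : ∀ᵐ z ∂γ, ∀ v ∈ Metric.ball t (t - q),
      HasDerivAt (fun v => 1 - Gfun β q v (h*ξ + β*z*Real.sqrt q))
        (-(Dfun β q v (h*ξ + β*z*Real.sqrt q))) v := by
    filter_upwards with z v hv
    exact (hasDerivAt_Gfun β q _ (ball_subset_gt ht hv)).const_sub 1
  exact (hasDerivAt_integral_of_dominated_loc_of_deriv_le (Metric.ball_mem_nhds t (sub_pos.mpr ht)) h1 h2 h3 h4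
    (integrable_const _) h5).2

lemma cont_inner_int (β h q t : ℝ) :
    Continuous (fun ξ => ∫ z, (1 - Gfun β q t (h*ξ + β*z*Real.sqrt q)) ∂γ) := by
  apply continuous_of_dominated (bound := fun _ => 1 + Real.exp (β^2*|t-q|/2))
  · intro ξ
    exact (continuous_const.sub ((cont_Gfun_a β q t).comp
      (continuous_const.add ((continuous_const.mul continuous_id).mul continuous_const)))).aestronglyMeasurable
  · intro ξ
    filter_upwards with z
    rw [Real.norm_eq_abs]
    calc |1 - Gfun β q t (h*ξ + β*z*Real.sqrt q)|
        ≤ |(1:ℝ)| + |Gfun β q t (h*ξ + β*z*Real.sqrt q)| := abs_sub _ _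
      _ ≤ 1 + Real.exp (β^2*|t-q|/2) := by
          rw [abs_one]; exact add_le_add_right (abs_Gfun_le' β q t _) 1
  · exact integrable_const _
  · filter_upwards with z
    exact continuous_const.sub ((cont_Gfun_a β q t).comp
      ((continuous_const.mul continuous_id).add continuous_const))

lemma cont_inner_int' (β h q t : ℝ) :
    Continuous (fun ξ => ∫ z, -(Dfun β q t (h*ξ + β*z*Real.sqrt q)) ∂γ) := by
  apply continuous_of_dominated (bound := fun _ => β^2 * Real.exp (β^2*|t-q|/2))
  · intro ξ
    exact ((cont_Dfun_a β q t).comp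
      (continuous_const.add ((continuous_const.mul continuous_id).mul continuous_const))).neg.aestronglyMeasurable
  · intro ξ
    filter_upwards with z
    rw [Real.norm_eq_abs, abs_neg]
    exact abs_Dfun_le' β q t _
  · exact integrable_const _
  · filter_upwards with z
    exact ((cont_Dfun_a β q t).comp
      ((continuous_const.mul continuous_id).add continuous_const)).neg

lemma layer2 (β h q : ℝ) {s : ℝ} (hs : q < s) :
    HasDerivAt (fun t => ∫ ξ, ∫ z, (1 - Gfun β q t (h*ξ + β*z*Real.sqrt q)) ∂γ ∂γ)
      (∫ ξ, ∫ z, -(Dfun β q s (h*ξ + β*z*Real.sqrt q)) ∂γ ∂γ) s := by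
  have h1 : ∀ᶠ v in nhds s, AEStronglyMeasurable
      (fun ξ => ∫ z, (1 - Gfun β q v (h*ξ + β*z*Real.sqrt q)) ∂γ) γ := by
    filter_upwards with v
    exact (cont_inner_int β h q v).aestronglyMeasurable
  have h2 : Integrable (fun ξ => ∫ z, (1 - Gfun β q s (h*ξ + β*z*Real.sqrt q)) ∂γ) γ := by
    refine integrable_bdd (1 + Real.exp (β^2*|s-q|/2))
      (cont_inner_int β h q s).aestronglyMeasurable ?_
    intro ξ
    have := norm_integral_le_of_norm_le_const (μ := γ)
      (f := fun z => 1 - Gfun β q s (h*ξ + β*z*Real.sqrt q))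
      (C := 1 + Real.exp (β^2*|s-q|/2)) ?_
    · simpa using this
    · filter_upwards with z
      rw [Real.norm_eq_abs]
      calc |1 - Gfun β q s (h*ξ + β*z*Real.sqrt q)|
          ≤ |(1:ℝ)| + |Gfun β q s (h*ξ + β*z*Real.sqrt q)| := abs_sub _ _
        _ ≤ 1 + Real.exp (β^2*|s-q|/2) := by
            rw [abs_one]; exact add_le_add_right (abs_Gfun_le' β q s _) 1
  have h3 : AEStronglyMeasurable
      (fun ξ => ∫ z, -(Dfun β q s (h*ξ + β*z*Real.sqrt q)) ∂γ) γ :=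
    (cont_inner_int' β h q s).aestronglyMeasurable
  have h4 : ∀ᵐ ξ ∂γ, ∀ v ∈ Metric.ball s (s - q),
      ‖∫ z, -(Dfun β q v (h*ξ + β*z*Real.sqrt q)) ∂γ‖ ≤ β^2 := by
    filter_upwards with ξ v hv
    have := norm_integral_le_of_norm_le_const (μ := γ)
      (f := fun z => -(Dfun β q v (h*ξ + β*z*Real.sqrt q))) (C := β^2) ?_
    · simpa using this
    · filter_upwards with z
      rw [Real.norm_eq_abs, abs_neg]
      exact abs_Dfun_le β q v _ (ball_subset_gt hs hv).le
  have h5 : ∀ᵐ ξ ∂γ, ∀ v ∈ Metric.ball s (s - q),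
      HasDerivAt (fun v => ∫ z, (1 - Gfun β q v (h*ξ + β*z*Real.sqrt q)) ∂γ)
        (∫ z, -(Dfun β q v (h*ξ + β*z*Real.sqrt q)) ∂γ) v := by
    filter_upwards with ξ v hv
    exact layer1 β h q ξ (ball_subset_gt hs hv)
  exact (hasDerivAt_integral_of_dominated_loc_of_deriv_le (Metric.ball_mem_nhds s (sub_pos.mpr hs)) h1 h2 h3 h4
    (integrable_const _) h5).2

lemma sq_u (β q t : ℝ) (ht : q < t) : (β*Real.sqrt (t-q))^2 = β^2*(t-q) := by
  rw [mul_pow, Real.sq_sqrt (sub_pos.mpr ht).le]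

lemma integrand_eq (β h q : ℝ) {t : ℝ} (ht : q < t) (ξ z : ℝ) :
    (∫ z', Real.tanh (h * ξ + β * z * Real.sqrt q + β * z' * Real.sqrt (t - q)) ^ 2 *
        Real.cosh (h * ξ + β * z * Real.sqrt q + β * z' * Real.sqrt (t - q)) ∂γ) /
      (∫ z', Real.cosh (h * ξ + β * z * Real.sqrt q + β * z' * Real.sqrt (t - q)) ∂γ)
    = 1 - Gfun β q t (h*ξ + β*z*Real.sqrt q) := by
  set a := h*ξ + β*z*Real.sqrt q with ha
  set u := β*Real.sqrt (t-q) with hu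
  have harg : ∀ z' : ℝ, a + β * z' * Real.sqrt (t - q) = a + u*z' := fun z' => by
    rw [hu]; ring
  have h1 : (∫ z', Real.tanh (a + β * z' * Real.sqrt (t - q)) ^ 2 *
      Real.cosh (a + β * z' * Real.sqrt (t - q)) ∂γ)
      = ∫ z', Real.tanh (a + u*z') ^2 * Real.cosh (a + u*z') ∂γ :=
    integral_congr_ae (ae_of_all _ (fun z' => by simp only [harg z']))
  have h2 : (∫ z', Real.cosh (a + β * z' * Real.sqrt (t - q)) ∂γ)
      = ∫ z', Real.cosh (a + u*z') ∂γ :=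
    integral_congr_ae (ae_of_all _ (fun z' => by simp only [harg z']))
  rw [h1, h2, ratio_eq a u]
  have hu2 : u^2 = β^2*(t-q) := sq_u β q t ht
  simp only [Gfun]
  rw [hu2]

lemma deriv_value_eq (β h q : ℝ) {s : ℝ} (hs : q < s) :
    (β ^ 2 * ∫ ξ, ∫ z,
      (∫ z', (Real.cosh (h * ξ + β * z * Real.sqrt q + β * z' * Real.sqrt (s - q)))⁻¹ ^ 3 ∂γ) /
      (∫ z', Real.cosh (h * ξ + β * z * Real.sqrt q + β * z' * Real.sqrt (s - q)) ∂γ) ∂γ ∂γ)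
    = ∫ ξ, ∫ z, -(Dfun β q s (h*ξ + β*z*Real.sqrt q)) ∂γ ∂γ := by
  rw [← integral_const_mul]
  apply integral_congr_ae (ae_of_all _ _)
  intro ξ
  rw [← integral_const_mul]
  apply integral_congr_ae (ae_of_all _ _)
  intro z
  set a := h*ξ + β*z*Real.sqrt q with ha
  set u := β*Real.sqrt (s-q) with hu
  have harg : ∀ z' : ℝ, a + β * z' * Real.sqrt (s - q) = a + u*z' := fun z' => by
    rw [hu]; ring
  have h1 : (∫ z', ((Real.cosh (a + β * z' * Real.sqrt (s - q)))⁻¹)^3 ∂γ)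
      = ∫ z', ((Real.cosh (a + u*z'))⁻¹)^3 ∂γ :=
    integral_congr_ae (ae_of_all _ (fun z' => by simp only [harg z']))
  have h2 : (∫ z', Real.cosh (a + β * z' * Real.sqrt (s - q)) ∂γ)
      = ∫ z', Real.cosh (a + u*z') ∂γ :=
    integral_congr_ae (ae_of_all _ (fun z' => by simp only [harg z']))
  rw [h1, h2, integral_cosh_gauss a u]
  have hu2 : u^2 = β^2*(s-q) := sq_u β q s hs
  simp only [Dfun]
  rw [show -(β^2*(s-q))/2 = -(u^2/2) from by rw [hu2]; ring, Real.exp_neg]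
  rw [div_eq_mul_inv, mul_inv]
  ring

/-- Fix `β > 0`, `h > 0`, `q ∈ [0,1)`. With `Y(s) = hξ + βz√q + βz'√(s−q)`,
the map `s ↦ E[E'[tanh²(Y)cosh(Y)] / E'[cosh(Y)]]` is differentiable on `(q,1)`
with derivative `β² E[E'[cosh⁻³(Y)] / E'[cosh(Y)]]`. -/
theorem stmt_2 (β h q : ℝ) (hβ : 0 < β) (hh : 0 < h) (hq : q ∈ Set.Ico (0 : ℝ) 1) :
    ∀ s ∈ Set.Ioo q 1,
      HasDerivAt
        (fun t : ℝ => ∫ ξ, ∫ z,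
          (∫ z', Real.tanh (h * ξ + β * z * Real.sqrt q + β * z' * Real.sqrt (t - q)) ^ 2 *
              Real.cosh (h * ξ + β * z * Real.sqrt q + β * z' * Real.sqrt (t - q)) ∂γ) /
          (∫ z', Real.cosh (h * ξ + β * z * Real.sqrt q + β * z' * Real.sqrt (t - q)) ∂γ)
            ∂γ ∂γ)
        (β ^ 2 * ∫ ξ, ∫ z,
          (∫ z', (Real.cosh (h * ξ + β * z * Real.sqrt q + β * z' * Real.sqrt (s - q)))⁻¹ ^ 3 ∂γ) /
          (∫ z', Real.cosh (h * ξ + β * z * Real.sqrt q + β * z' * Real.sqrt (s - q)) ∂γ)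
            ∂γ ∂γ)
        s := by
  rintro s ⟨hsq, hs1⟩
  rw [deriv_value_eq β h q hsq]
  have L2 := layer2 β h q hsq
  apply L2.congr_of_eventuallyEq
  filter_upwards [Ioo_mem_nhds hsq hs1] with t ht
  apply integral_congr_ae (ae_of_all _ _)
  intro ξ
  apply integral_congr_ae (ae_of_all _ _)
  intro z
  exact integrand_eq β h q ht.1 ξ z
end

section
/- Let q ∈ [0,1) and let f : ℝ → ℝ be twice continuously differentiable with bounded second derivative. Then for every s ∈ (q,1], the function s ↦ ∫ f(y√(s−q)) dγ(y) is differentiable at s with derivative (1/2) ∫ f''(y√(s−q)) dγ(y). -/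
open MeasureTheory Real

local notation "γ" => ProbabilityTheory.gaussianReal 0 1

open ProbabilityTheory
open scoped NNReal ENNReal

noncomputable def G : ℝ → ℝ := fun y => (Real.sqrt (2 * π))⁻¹ * Real.exp (-(y ^ 2) / 2)

lemma gpdf_eq : gaussianPDFReal 0 1 = G := by
  funext y
  simp [gaussianPDFReal, G]

lemma G_nonneg (y : ℝ) : 0 ≤ G y := by
  unfold G
  positivity

lemma G_cont : Continuous G := by
  unfold G
  continuity

lemma hasDerivAt_negG (y : ℝ) : HasDerivAt (fun y => -(G y)) (y * G y) y := by
  have h1 : HasDerivAt (fun y : ℝ => -(y ^ 2) / 2) (-y) y := by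
    have := ((hasDerivAt_pow 2 y).neg.div_const 2)
    refine this.congr_deriv ?_
    norm_num
    ring
  have h2 := (h1.exp.const_mul ((Real.sqrt (2 * π))⁻¹)).neg
  refine h2.congr_deriv ?_
  unfold G
  ring

lemma integrable_poly_gauss {h : ℝ → ℝ} (hc : Continuous h) (c₀ c₁ c₂ : ℝ)
    (hb : ∀ y, |h y| ≤ c₀ + c₁ * |y| + c₂ * y ^ 2) :
    Integrable (fun y => h y * G y) := by
  have hb2 : (0:ℝ) < 1/2 := by norm_num
  have e0 : Integrable (fun y : ℝ => Real.exp (-(1/2) * y ^ 2)) := integrable_exp_neg_mul_sq hb2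
  have e1 : Integrable (fun y : ℝ => |y| * Real.exp (-(1/2) * y ^ 2)) := by
    refine (integrable_mul_exp_neg_mul_sq hb2).abs.congr
      (Filter.Eventually.of_forall fun y => ?_)
    simp only []
    rw [abs_mul, abs_of_pos (Real.exp_pos _)]
  have e2 : Integrable (fun y : ℝ => y ^ 2 * Real.exp (-(1/2) * y ^ 2)) := by
    refine (integrable_rpow_mul_exp_neg_mul_sq hb2 (s := (2:ℝ)) (by norm_num)).congr
      (Filter.Eventually.of_forall fun y => ?_)
    simp only []
    rw [show ((2:ℝ) = ((2:ℕ):ℝ)) by norm_num, Real.rpow_natCast]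
  have hbig : Integrable (fun y : ℝ =>
      (c₀ + c₁ * |y| + c₂ * y ^ 2) * G y) := by
    have h1 := ((e0.const_mul c₀).add (e1.const_mul c₁)).add (e2.const_mul c₂)
    have h2 := h1.const_mul ((Real.sqrt (2 * π))⁻¹)
    have he : ∀ z : ℝ, Real.exp (-(1/2) * z ^ 2) = Real.exp (-(z ^ 2) / 2) := by
      intro z; ring_nf
    refine h2.congr (Filter.Eventually.of_forall fun y => ?_)
    simp only [Pi.add_apply, he]
    unfold G
    ring
  refine hbig.mono' ((hc.mul G_cont).aestronglyMeasurable)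
    (Filter.Eventually.of_forall fun y => ?_)
  rw [Real.norm_eq_abs, abs_mul, abs_of_nonneg (G_nonneg y)]
  exact mul_le_mul_of_nonneg_right (hb y) (G_nonneg y)


lemma gauss_eq_withDensity :
    (ProbabilityTheory.gaussianReal 0 1 : Measure ℝ)
      = volume.withDensity (fun y => ((G y).toNNReal : ℝ≥0∞)) := by
  rw [gaussianReal_of_var_ne_zero 0 one_ne_zero]
  congr 1
  funext y
  rw [gaussianPDF, gpdf_eq]
  rfl

lemma meas_toNN : Measurable (fun y => Real.toNNReal (G y)) :=
  (G_cont.measurable).real_toNNReal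

lemma integral_gauss_s4 (h : ℝ → ℝ) : ∫ y, h y ∂γ = ∫ y, h y * G y := by
  rw [gauss_eq_withDensity, integral_withDensity_eq_integral_smul meas_toNN]
  congr 1
  funext y
  rw [NNReal.smul_def, smul_eq_mul, Real.coe_toNNReal _ (G_nonneg y), mul_comm]

lemma integrable_gauss_of_poly {h : ℝ → ℝ} (hc : Continuous h) (c₀ c₁ c₂ : ℝ)
    (hb : ∀ y, |h y| ≤ c₀ + c₁ * |y| + c₂ * y ^ 2) :
    Integrable h γ := by
  rw [gauss_eq_withDensity, integrable_withDensity_iff_integrable_smul meas_toNN]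
  refine (integrable_poly_gauss hc c₀ c₁ c₂ hb).congr
    (Filter.Eventually.of_forall fun y => ?_)
  simp only [NNReal.smul_def, smul_eq_mul, Real.coe_toNNReal _ (G_nonneg y), mul_comm]

section main
variable {f : ℝ → ℝ} {C : ℝ}

lemma deriv_poly_bound (hfd' : Differentiable ℝ (deriv f))
    (hC : ∀ x : ℝ, |deriv (deriv f) x| ≤ C) (x : ℝ) :
    |deriv f x| ≤ |deriv f 0| + C * |x| := by
  have h := convex_univ.norm_image_sub_le_of_norm_hasDerivWithin_le
    (f' := deriv (deriv f)) (fun u _ => ((hfd' u).hasDerivAt).hasDerivWithinAt)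
    (fun u _ => by rw [Real.norm_eq_abs]; exact hC u)
    (Set.mem_univ (0:ℝ)) (Set.mem_univ x)
  rw [Real.norm_eq_abs, Real.norm_eq_abs, sub_zero] at h
  have h2 := abs_sub_abs_le_abs_sub (deriv f x) (deriv f 0)
  linarith

lemma f_poly_bound (hfd : Differentiable ℝ f) (hfd' : Differentiable ℝ (deriv f))
    (hC : ∀ x : ℝ, |deriv (deriv f) x| ≤ C) (x : ℝ) :
    |f x| ≤ |f 0| + |deriv f 0| * |x| + C * x ^ 2 := by
  have hC0 : 0 ≤ C := le_trans (abs_nonneg _) (hC 0)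
  have h := (convex_uIcc (0:ℝ) x).norm_image_sub_le_of_norm_hasDerivWithin_le
    (f' := deriv f) (fun u _ => ((hfd u).hasDerivAt).hasDerivWithinAt)
    (C := |deriv f 0| + C * |x|)
    (fun u hu => by
      rw [Real.norm_eq_abs]
      have hu' : |u| ≤ |x| := by
        rcases Set.mem_uIcc.mp hu with ⟨h1, h2⟩ | ⟨h1, h2⟩ <;>
          · rw [abs_le]
            constructor <;> nlinarith [le_abs_self x, neg_abs_le x]
      have := deriv_poly_bound hfd' hC u
      nlinarith)
    Set.left_mem_uIcc Set.right_mem_uIcc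
  rw [Real.norm_eq_abs, Real.norm_eq_abs, sub_zero] at h
  have h2 := abs_sub_abs_le_abs_sub (f x) (f 0)
  nlinarith [sq_abs x, abs_nonneg x]

lemma ibp (hf : ContDiff ℝ 2 f) (hC : ∀ x : ℝ, |deriv (deriv f) x| ≤ C)
    {a : ℝ} (ha : 0 < a) :
    ∫ y, deriv f (y * a) * (y / (2 * a)) ∂γ
      = (1 / 2) * ∫ y, deriv (deriv f) (y * a) ∂γ := by
  have hC0 : 0 ≤ C := le_trans (abs_nonneg _) (hC 0)
  have hfd : Differentiable ℝ f := hf.differentiable (by norm_num)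
  have hf1 : ContDiff ℝ 1 (deriv f) := by
    have := hf.iterate_deriv' 1 1
    simp only [Function.iterate_one] at this
    exact_mod_cast this
  have hfd' : Differentiable ℝ (deriv f) := hf1.differentiable one_ne_zero
  have cont_f' : Continuous (deriv f) := hf1.continuous
  have cont_f'' : Continuous (deriv (deriv f)) := hf1.continuous_deriv le_rfl
  -- the functions in integration by parts
  set u : ℝ → ℝ := fun y => deriv f (y * a) / (2 * a) with hu_def
  set u' : ℝ → ℝ := fun y => deriv (deriv f) (y * a) * a / (2 * a) with hu'_def
  set v : ℝ → ℝ := fun y => -(G y) with hv_def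
  set v' : ℝ → ℝ := fun y => y * G y with hv'_def
  have hu : ∀ y, HasDerivAt u (u' y) y := by
    intro y
    have hin : HasDerivAt (fun y : ℝ => y * a) a y := by
      simpa using (hasDerivAt_id y).mul_const a
    exact (((hfd' (y * a)).hasDerivAt.comp y hin).div_const (2 * a))
  have hv : ∀ y, HasDerivAt v (v' y) y := hasDerivAt_negG
  -- integrability
  have h2a : (0:ℝ) < 2 * a := by linarith
  have hba : ∀ y : ℝ, |deriv f (y * a)| ≤ |deriv f 0| + C * (|y| * a) := by
    intro y
    have h1 := deriv_poly_bound hfd' hC (y * a)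
    rwa [abs_mul, abs_of_pos ha] at h1
  have huv' : Integrable (u * v') := by
    have := integrable_poly_gauss
      (h := fun y => deriv f (y * a) / (2 * a) * y)
      (by fun_prop) 0 (|deriv f 0| / (2 * a)) (C / 2) (fun y => ?_)
    · refine this.congr (Filter.Eventually.of_forall fun y => ?_)
      simp only [Pi.mul_apply, hu_def, hv'_def]
      ring
    · calc |deriv f (y * a) / (2 * a) * y| = |deriv f (y * a)| / (2 * a) * |y| := by
            rw [abs_mul, abs_div, abs_of_pos h2a]
        _ ≤ (|deriv f 0| + C * (|y| * a)) / (2 * a) * |y| := by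
            gcongr
            exact hba y
        _ = |deriv f 0| / (2 * a) * |y| + C / 2 * y ^ 2 := by
            field_simp
            linear_combination (C * a) * sq_abs y
        _ ≤ 0 + |deriv f 0| / (2 * a) * |y| + C / 2 * y ^ 2 := by linarith
  have hu'v : Integrable (u' * v) := by
    have := integrable_poly_gauss
      (h := fun y => -(deriv (deriv f) (y * a) * a / (2 * a)))
      (by fun_prop) (C / 2) 0 0 (fun y => ?_)
    · refine this.congr (Filter.Eventually.of_forall fun y => ?_)
      simp only [Pi.mul_apply, hu'_def, hv_def]
      ring
    · calc |(-(deriv (deriv f) (y * a) * a / (2 * a)))|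
          = |deriv (deriv f) (y * a)| * a / (2 * a) := by
            rw [abs_neg, abs_div, abs_mul, abs_of_pos ha, abs_of_pos h2a]
        _ = |deriv (deriv f) (y * a)| / 2 := by field_simp
        _ ≤ C / 2 := by gcongr; exact hC _
        _ ≤ C / 2 + 0 * |y| + 0 * y ^ 2 := by simp
  have huv : Integrable (u * v) := by
    have := integrable_poly_gauss
      (h := fun y => -(deriv f (y * a) / (2 * a)))
      (by fun_prop) (|deriv f 0| / (2 * a)) (C / 2) 0 (fun y => ?_)
    · refine this.congr (Filter.Eventually.of_forall fun y => ?_)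
      simp only [Pi.mul_apply, hu_def, hv_def]
      ring
    · calc |(-(deriv f (y * a) / (2 * a)))| = |deriv f (y * a)| / (2 * a) := by
            rw [abs_neg, abs_div, abs_of_pos h2a]
        _ ≤ (|deriv f 0| + C * (|y| * a)) / (2 * a) := by gcongr; exact hba y
        _ = |deriv f 0| / (2 * a) + C / 2 * |y| := by field_simp
        _ ≤ |deriv f 0| / (2 * a) + C / 2 * |y| + 0 * y ^ 2 := by simp
  have key := MeasureTheory.integral_mul_deriv_eq_deriv_mul_of_integrable (fun x _ => hu x) (fun x _ => hv x) huv' hu'v huv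
  -- rewrite both sides
  rw [integral_gauss_s4, integral_gauss_s4]
  have lhs_eq : ∫ y, deriv f (y * a) * (y / (2 * a)) * G y = ∫ y, u y * v' y := by
    congr 1; funext y; simp only [hu_def, hv'_def]; ring
  have rhs_eq : (1/2 : ℝ) * ∫ y, deriv (deriv f) (y * a) * G y = -∫ y, u' y * v y := by
    rw [← integral_neg, ← integral_const_mul]
    congr 1; funext y; simp only [hu'_def, hv_def]
    field_simp
  rw [lhs_eq, rhs_eq, ← key]
end main

/-- Let `q ∈ [0,1)` and `f : ℝ → ℝ` be twice continuously differentiable with bounded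
second derivative. Then for every `s ∈ (q,1]`, the function
`s ↦ ∫ f(y√(s−q)) dγ(y)` is differentiable at `s` with derivative
`(1/2) ∫ f''(y√(s−q)) dγ(y)`. -/
theorem stmt_4 (q : ℝ) (hq : q ∈ Set.Ico (0 : ℝ) 1) (f : ℝ → ℝ)
    (hf : ContDiff ℝ 2 f) (C : ℝ) (hC : ∀ x : ℝ, |deriv (deriv f) x| ≤ C) :
    ∀ s ∈ Set.Ioc q 1,
      HasDerivAt (fun t : ℝ => ∫ y, f (y * Real.sqrt (t - q)) ∂γ)
        ((1 / 2) * ∫ y, deriv (deriv f) (y * Real.sqrt (s - q)) ∂γ) s := by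
  intro s hs
  obtain ⟨hsq, hs1⟩ := hs
  have hsq' : 0 < s - q := sub_pos.mpr hsq
  have ha : 0 < Real.sqrt (s - q) := Real.sqrt_pos.mpr hsq'
  have hC0 : 0 ≤ C := le_trans (abs_nonneg _) (hC 0)
  have hfd : Differentiable ℝ f := hf.differentiable (by norm_num)
  have hf1 : ContDiff ℝ 1 (deriv f) := by
    have := hf.iterate_deriv' 1 1
    simp only [Function.iterate_one] at this
    exact_mod_cast this
  have hfd' : Differentiable ℝ (deriv f) := hf1.differentiable one_ne_zero
  have cont_f' : Continuous (deriv f) := hf1.continuous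
  set ε : ℝ := (s - q) / 2 with hε_def
  have ε_pos : 0 < ε := by positivity
  have hεs : 0 < Real.sqrt ε := Real.sqrt_pos.mpr ε_pos
  set F' : ℝ → ℝ → ℝ :=
    fun t y => deriv f (y * Real.sqrt (t - q)) * (y / (2 * Real.sqrt (t - q))) with hF'_def
  set bound : ℝ → ℝ :=
    fun y => |deriv f 0| / (2 * Real.sqrt ε) * |y| + C / 2 * y ^ 2 with hbound_def
  have hball : ∀ t ∈ Metric.ball s ε, ε ≤ t - q := by
    intro t ht
    rw [Metric.mem_ball, Real.dist_eq, abs_lt] at ht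
    simp only [hε_def] at *
    linarith [ht.1]
  have key := hasDerivAt_integral_of_dominated_loc_of_deriv_le
    (F := fun t y => f (y * Real.sqrt (t - q))) (F' := F')
    (μ := ProbabilityTheory.gaussianReal 0 1) (x₀ := s) (bound := bound) (Metric.ball_mem_nhds s ε_pos)
    (Filter.Eventually.of_forall fun t =>
      (hf.continuous.comp (continuous_id.mul continuous_const)).aestronglyMeasurable)
    ?hF_int ?hF'_meas ?h_bound ?bound_int ?h_diff
  case hF_int =>
    refine integrable_gauss_of_poly (by fun_prop)
      (|f 0|) (|deriv f 0| * Real.sqrt (s - q)) (C * Real.sqrt (s - q) ^ 2) (fun y => ?_)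
    have h1 := f_poly_bound hfd hfd' hC (y * Real.sqrt (s - q))
    rw [abs_mul, abs_of_pos ha, mul_pow] at h1
    calc |f (y * Real.sqrt (s - q))|
        ≤ |f 0| + |deriv f 0| * (|y| * Real.sqrt (s - q)) + C * (y ^ 2 * Real.sqrt (s - q) ^ 2) :=
          h1
      _ = |f 0| + |deriv f 0| * Real.sqrt (s - q) * |y| + C * Real.sqrt (s - q) ^ 2 * y ^ 2 := by
          ring
  case hF'_meas =>
    refine Continuous.aestronglyMeasurable ?_
    fun_prop
  case h_bound =>
    refine Filter.Eventually.of_forall fun y => fun t ht => ?_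
    have htq : ε ≤ t - q := hball t ht
    have htq0 : 0 < t - q := lt_of_lt_of_le ε_pos htq
    have hb : 0 < Real.sqrt (t - q) := Real.sqrt_pos.mpr htq0
    have hbε : Real.sqrt ε ≤ Real.sqrt (t - q) := Real.sqrt_le_sqrt htq
    have h1 : |deriv f (y * Real.sqrt (t - q))|
        ≤ |deriv f 0| + C * (|y| * Real.sqrt (t - q)) := by
      have := deriv_poly_bound hfd' hC (y * Real.sqrt (t - q))
      rwa [abs_mul, abs_of_pos hb] at this
    rw [Real.norm_eq_abs]
    calc |F' t y| = |deriv f (y * Real.sqrt (t - q))| * (|y| / (2 * Real.sqrt (t - q))) := by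
          rw [hF'_def, abs_mul, abs_div, abs_of_pos (by linarith : (0:ℝ) < 2 * Real.sqrt (t - q))]
      _ ≤ (|deriv f 0| + C * (|y| * Real.sqrt (t - q))) * (|y| / (2 * Real.sqrt (t - q))) := by
          gcongr
      _ = |deriv f 0| * |y| / (2 * Real.sqrt (t - q)) + C / 2 * y ^ 2 := by
          field_simp
          linear_combination (C * Real.sqrt (t - q)) * sq_abs y
      _ ≤ |deriv f 0| / (2 * Real.sqrt ε) * |y| + C / 2 * y ^ 2 := by
          gcongr ?_ + _
          rw [div_mul_eq_mul_div]
          gcongr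
  case bound_int =>
    refine integrable_gauss_of_poly (by fun_prop)
      0 (|deriv f 0| / (2 * Real.sqrt ε)) (C / 2) (fun y => ?_)
    rw [hbound_def, abs_of_nonneg (by positivity)]
    simp
  case h_diff =>
    refine Filter.Eventually.of_forall fun y => fun t ht => ?_
    have htq0 : 0 < t - q := lt_of_lt_of_le ε_pos (hball t ht)
    have h1 : HasDerivAt (fun t : ℝ => t - q) 1 t := (hasDerivAt_id t).sub_const q
    have h2 : HasDerivAt Real.sqrt (1 / (2 * Real.sqrt (t - q))) (t - q) :=
      Real.hasDerivAt_sqrt (ne_of_gt htq0)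
    have h3 : HasDerivAt (fun t : ℝ => Real.sqrt (t - q))
        (1 / (2 * Real.sqrt (t - q)) * 1) t := h2.comp t h1
    have h4 := h3.const_mul y
    have h5 : HasDerivAt (fun t : ℝ => f (y * Real.sqrt (t - q)))
        (deriv f (y * Real.sqrt (t - q)) * (y * (1 / (2 * Real.sqrt (t - q)) * 1))) t :=
      ((hfd (y * Real.sqrt (t - q))).hasDerivAt).comp t h4
    refine h5.congr_deriv ?_
    rw [hF'_def]
    ring
  have main := key.2
  rwa [show (∫ y, F' s y ∂(ProbabilityTheory.gaussianReal 0 1))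
      = (1 / 2) * ∫ y, deriv (deriv f) (y * Real.sqrt (s - q)) ∂(ProbabilityTheory.gaussianReal 0 1)
    from ibp hf hC ha] at main
end
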